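/- arXiv:1005.2162 — 6 statements merged into one kernel-verified Lean document; each statement's English description precedes it below -/
import Mathlib

section
/- Let A be a symmetric n×n matrix with signature (q, n-q, 0) (q positive and n-q negative eigenvalues, no zero eigenvalue). Then the mn×mn block matrix G with zero diagonal blocks and all off-diagonal blocks equal to A has signature (q + (m-1)(n-q), (n-q) + q(m-1), 0). -/
open Matrix Polynomial

lemma charpoly_conj {R : Type*} [CommRing R] {k : Type*} [Fintype k] [DecidableEq k]
    (S N T : Matrix k k R) (h : S * T = 1) :
    (S * N * T).charpoly = N.charpoly := by
  have key : charmatrix (S * N * T) = S.map C * charmatrix N * T.map C := by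
    unfold charmatrix
    simp only [RingHom.mapMatrix_apply, Matrix.mul_sub, Matrix.sub_mul]
    congr 1
    · rw [← (Matrix.scalar_commute (X : R[X]) (fun M => (Commute.all X M)) (S.map C)).eq,
        Matrix.mul_assoc, ← Matrix.map_mul, h, Matrix.map_one C (map_zero C) (map_one C),
        Matrix.mul_one]
    · rw [← Matrix.map_mul, ← Matrix.map_mul]
  have hmul : (S.map (C : R →+* R[X])).det * (T.map C).det = 1 := by
    rw [← det_mul, ← Matrix.map_mul, h, Matrix.map_one C (map_zero C) (map_one C), det_one]
  rw [Matrix.charpoly, key, det_mul, det_mul, Matrix.charpoly]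
  calc (S.map C).det * (charmatrix N).det * (T.map C).det
      = (S.map C).det * (T.map C).det * (charmatrix N).det := by ring
    _ = (charmatrix N).det := by rw [hmul, one_mul]

lemma charpoly_diag {R : Type*} [CommRing R] {k : Type*} [Fintype k] [DecidableEq k]
    (d : k → R) : (Matrix.diagonal d).charpoly = ∏ i, (X - C (d i)) := by
  have : charmatrix (Matrix.diagonal d) = Matrix.diagonal (fun i => X - C (d i)) := by
    ext i j
    rcases eq_or_ne i j with rfl | hij
    · simp [charmatrix_apply_eq]
    · simp [charmatrix_apply_ne _ _ _ hij, Matrix.diagonal_apply_ne _ hij]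
  rw [Matrix.charpoly, this, det_diagonal]

lemma herm_charpoly {k : Type*} [Fintype k] [DecidableEq k] {M : Matrix k k ℝ}
    (hM : M.IsHermitian) : M.charpoly = ∏ i, (X - C (hM.eigenvalues i)) := by
  have h1 : (hM.eigenvectorUnitary : Matrix k k ℝ) * (star (hM.eigenvectorUnitary : Matrix k k ℝ)) = 1 :=
    (Matrix.mem_unitaryGroup_iff).mp (hM.eigenvectorUnitary).2
  have hs := hM.spectral_theorem
  have hd : (RCLike.ofReal ∘ hM.eigenvalues : k → ℝ) = hM.eigenvalues := by
    funext i; simp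
  rw [hd] at hs
  calc M.charpoly = ((hM.eigenvectorUnitary : Matrix k k ℝ) * Matrix.diagonal hM.eigenvalues
        * (star (hM.eigenvectorUnitary : Matrix k k ℝ))).charpoly := by exact congrArg Matrix.charpoly hs
    _ = (Matrix.diagonal hM.eigenvalues).charpoly := by
        apply charpoly_conj _ _ _ h1
    _ = ∏ i, (X - C (hM.eigenvalues i)) := charpoly_diag _

lemma multiset_eq_of_prod {k k' : Type*} [Fintype k] [Fintype k'] (a : k → ℝ) (b : k' → ℝ)
    (h : ∏ i, (X - C (a i)) = ∏ i, (X - C (b i))) :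
    Multiset.map a Finset.univ.val = Multiset.map b Finset.univ.val := by
  have ha := Polynomial.roots_multiset_prod_X_sub_C (Multiset.map a Finset.univ.val)
  have hb := Polynomial.roots_multiset_prod_X_sub_C (Multiset.map b Finset.univ.val)
  rw [← ha, ← hb]
  congr 1
  rw [Multiset.map_map, Multiset.map_map]
  exact h

lemma count_transfer {k k' : Type*} [Fintype k] [Fintype k'] (a : k → ℝ) (b : k' → ℝ)
    (h : Multiset.map a Finset.univ.val = Multiset.map b Finset.univ.val)
    (p : ℝ → Prop) [DecidablePred p] :
    (Finset.univ.filter fun i => p (a i)).card = (Finset.univ.filter fun i => p (b i)).card := by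
  have := congrArg (Multiset.countP p) h
  rw [Multiset.countP_map, Multiset.countP_map] at this
  simpa [Finset.card, Finset.filter] using this

lemma card_filter_prod {α β : Type*} [Fintype α] [Fintype β] (p : α × β → Prop) [DecidablePred p] :
    (Finset.univ.filter p).card = ∑ i, (Finset.univ.filter fun j => p (i, j)).card := by
  simp only [Finset.card_filter]
  rw [Fintype.sum_prod_type]

lemma sum_if_zero {m : ℕ} [NeZero m] (a b : ℕ) :
    ∑ i : Fin m, (if i = 0 then a else b) = a + (m - 1) * b := by
  rw [Finset.sum_ite]
  simp only [Finset.sum_const, smul_eq_mul]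
  rw [Finset.filter_eq' , if_pos (Finset.mem_univ _), Finset.filter_ne']
  simp [Finset.card_erase_of_mem, mul_comm]

section
variable {m : ℕ} [NeZero m]

noncomputable def Pm (m : ℕ) [NeZero m] : Matrix (Fin m) (Fin m) ℝ :=
  Matrix.of fun i j => if j = 0 then 1 else if i = 0 then 1 else if i = j then -1 else 0

noncomputable def Pminv (m : ℕ) [NeZero m] : Matrix (Fin m) (Fin m) ℝ :=
  Matrix.of fun i j => if i = 0 then (m:ℝ)⁻¹ else if i = j then (m:ℝ)⁻¹ - 1 else (m:ℝ)⁻¹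

def Bm (m : ℕ) : Matrix (Fin m) (Fin m) ℝ :=
  Matrix.of fun i j => if i = j then 0 else 1

noncomputable def dm (m : ℕ) [NeZero m] : Fin m → ℝ :=
  fun i => if i = 0 then (m:ℝ) - 1 else -1

lemma Pm_rowsum (i : Fin m) : ∑ j, Pm m i j = if i = 0 then (m:ℝ) else 0 := by
  rcases eq_or_ne i 0 with rfl | hi
  · have : ∀ j : Fin m, Pm m 0 j = 1 := by
      intro j; simp only [Pm, Matrix.of_apply]; split <;> simp
    simp [this, Finset.sum_const]
  · have : ∀ j : Fin m, Pm m i j = (if j = 0 then (1:ℝ) else 0) + (if j = i then -1 else 0) := by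
      intro j
      simp only [Pm, Matrix.of_apply]
      rcases eq_or_ne j 0 with rfl | hj
      · simp [Ne.symm hi, hi]
      · simp [hj, hi, eq_comm]
    rw [Finset.sum_congr rfl fun j _ => this j, Finset.sum_add_distrib,
      Finset.sum_ite_eq' Finset.univ (0 : Fin m) (fun _ => (1:ℝ)),
      Finset.sum_ite_eq' Finset.univ i (fun _ => (-1:ℝ))]
    simp [hi]

lemma Pm_colsum (k : Fin m) : ∑ j, Pm m j k = if k = 0 then (m:ℝ) else 0 := by
  rcases eq_or_ne k 0 with rfl | hk
  · have : ∀ j : Fin m, Pm m j 0 = 1 := by intro j; simp [Pm]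
    simp [this]
  · have : ∀ j : Fin m, Pm m j k = (if j = 0 then (1:ℝ) else 0) + (if j = k then -1 else 0) := by
      intro j
      simp only [Pm, Matrix.of_apply]
      rcases eq_or_ne j 0 with rfl | hj
      · simp [hk, Ne.symm hk]
      · simp [hj, hk]
    rw [Finset.sum_congr rfl fun j _ => this j, Finset.sum_add_distrib,
      Finset.sum_ite_eq' Finset.univ (0 : Fin m) (fun _ => (1:ℝ)),
      Finset.sum_ite_eq' Finset.univ k (fun _ => (-1:ℝ))]
    simp [hk]

lemma Pminv_apply (j k : Fin m) :
    Pminv m j k = (m:ℝ)⁻¹ - (if j = k ∧ k ≠ 0 then 1 else 0) := by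
  simp only [Pminv, Matrix.of_apply]
  rcases eq_or_ne j 0 with rfl | hj
  · rcases eq_or_ne k 0 with rfl | hk
    · simp
    · have h' : ¬((0:Fin m) = k ∧ k ≠ 0) := fun h => hk h.1.symm
      simp [h']
  · rcases eq_or_ne j k with rfl | hjk
    · simp [hj]
    · simp [hj, hjk]

lemma Pm_mul_Pminv (hm : (m:ℝ) ≠ 0) : Pm m * Pminv m = 1 := by
  ext i k
  rw [Matrix.mul_apply]
  have step : ∀ j : Fin m, Pm m i j * Pminv m j k
      = Pm m i j * (m:ℝ)⁻¹ - (if j = k then (if k = 0 then 0 else Pm m i j) else 0) := by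
    intro j
    rw [Pminv_apply, mul_sub]
    congr 1
    rcases eq_or_ne j k with rfl | hjk
    · rcases eq_or_ne j 0 with rfl | hj
      · simp
      · simp [hj]
    · simp [hjk]
  rw [Finset.sum_congr rfl fun j _ => step j, Finset.sum_sub_distrib, ← Finset.sum_mul,
    Pm_rowsum, Finset.sum_ite_eq' Finset.univ k]
  rcases eq_or_ne i 0 with rfl | hi
  · rcases eq_or_ne k 0 with rfl | hk
    · simp [Matrix.one_apply, hm]
    · simp [Matrix.one_apply, Ne.symm hk, hk, Pm]
  · rcases eq_or_ne k 0 with rfl | hk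
    · simp [Matrix.one_apply, hi, Pm]
    · simp only [hi, if_neg hi, if_neg hk, Matrix.one_apply, Pm, Matrix.of_apply, zero_mul,
        zero_sub, neg_neg]
      rcases eq_or_ne i k with rfl | hik
      · simp
      · simp [hik]

lemma Bm_mul_Pm : Bm m * Pm m = Pm m * Matrix.diagonal (dm m) := by
  ext i k
  rw [Matrix.mul_apply, Matrix.mul_diagonal]
  have step : ∀ j : Fin m, Bm m i j * Pm m j k
      = Pm m j k - (if j = i then Pm m j k else 0) := by
    intro j
    simp only [Bm, Matrix.of_apply]
    rcases eq_or_ne j i with rfl | hj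
    · simp
    · simp [Ne.symm hj, hj]
  rw [Finset.sum_congr rfl fun j _ => step j, Finset.sum_sub_distrib,
    Finset.sum_ite_eq' Finset.univ i, Pm_colsum]
  rcases eq_or_ne k 0 with rfl | hk
  · have : Pm m i 0 = 1 := by simp [Pm]
    simp [this, dm]
  · simp [hk, dm]
  
lemma Bm_eq (hm : (m:ℝ) ≠ 0) : Bm m = Pm m * Matrix.diagonal (dm m) * Pminv m := by
  rw [← Bm_mul_Pm, Matrix.mul_assoc, Pm_mul_Pminv hm, Matrix.mul_one]

end


/-- The `mn × mn` block matrix with zero diagonal blocks and all off-diagonal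
blocks equal to `A`. -/
def blockConst (m n : ℕ) (A : Matrix (Fin n) (Fin n) ℝ) :
    Matrix (Fin m × Fin n) (Fin m × Fin n) ℝ :=
  fun p q => if p.1 = q.1 then 0 else A p.2 q.2

/-- if the symmetric invertible matrix `A` has signature
`(q, n-q, 0)`, then the block matrix `G` has signature
`(q + (m-1)(n-q), (n-q) + q(m-1), 0)`. -/
theorem stmt2 (n m q : ℕ) (hn : 1 ≤ n) (hm : 2 ≤ m) (hq : q ≤ n)
    (A : Matrix (Fin n) (Fin n) ℝ) (hA : A.IsHermitian) (hinv : IsUnit A.det)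
    (hpos : (Finset.univ.filter fun i => 0 < hA.eigenvalues i).card = q)
    (hneg : (Finset.univ.filter fun i => hA.eigenvalues i < 0).card = n - q)
    (hG : (blockConst m n A).IsHermitian) :
    (Finset.univ.filter fun p : Fin m × Fin n => 0 < hG.eigenvalues p).card
        = q + (m - 1) * (n - q) ∧
    (Finset.univ.filter fun p : Fin m × Fin n => hG.eigenvalues p < 0).card
        = (n - q) + q * (m - 1) ∧
    (Finset.univ.filter fun p : Fin m × Fin n => hG.eigenvalues p = 0).card = 0 := by
  haveI : NeZero m := ⟨by omega⟩
  have hm0 : (m : ℝ) ≠ 0 := Nat.cast_ne_zero.2 (by omega)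
  set lam := hA.eigenvalues with hlam
  set U : Matrix (Fin n) (Fin n) ℝ := (hA.eigenvectorUnitary : Matrix (Fin n) (Fin n) ℝ) with hUdef
  have hUs : U * star U = 1 := (Matrix.mem_unitaryGroup_iff).mp hA.eigenvectorUnitary.2
  have hAs : A = U * Matrix.diagonal lam * star U := by
    have h := hA.spectral_theorem
    have hd : (RCLike.ofReal ∘ hA.eigenvalues : Fin n → ℝ) = lam := by funext i; simp [hlam]
    rwa [hd] at h
  have hGk : blockConst m n A = Matrix.kroneckerMap (· * ·) (Bm m) A := by
    ext ⟨i, j⟩ ⟨k, l⟩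
    simp only [blockConst, Matrix.kroneckerMap_apply, Bm, Matrix.of_apply]
    rcases eq_or_ne i k with rfl | h
    · simp
    · simp [h]
  have hGdec : blockConst m n A
      = (Matrix.kroneckerMap (· * ·) (Pm m) U)
        * Matrix.diagonal (fun p : Fin m × Fin n => dm m p.1 * lam p.2)
        * (Matrix.kroneckerMap (· * ·) (Pminv m) (star U)) := by
    rw [← Matrix.diagonal_kronecker_diagonal, ← Matrix.mul_kronecker_mul,
      ← Matrix.mul_kronecker_mul, ← Bm_eq hm0, ← hAs, hGk]
  have hST : (Matrix.kroneckerMap (· * ·) (Pm m) U)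
      * (Matrix.kroneckerMap (· * ·) (Pminv m) (star U)) = 1 := by
    rw [← Matrix.mul_kronecker_mul, Pm_mul_Pminv hm0, hUs, Matrix.one_kronecker_one]
  have hchar : ∏ p : Fin m × Fin n, (Polynomial.X - Polynomial.C (hG.eigenvalues p))
      = ∏ p : Fin m × Fin n, (Polynomial.X - Polynomial.C (dm m p.1 * lam p.2)) := by
    rw [← herm_charpoly hG, ← charpoly_diag, hGdec]
    exact charpoly_conj _ _ _ hST
  have mset := multiset_eq_of_prod _ _ hchar
  have hdet : A.det = ∏ i, lam i := by simpa using hA.det_eq_prod_eigenvalues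
  have hlam_ne : ∀ j, lam j ≠ 0 := by
    intro j hj
    have h0 : A.det = 0 := by rw [hdet]; exact Finset.prod_eq_zero (Finset.mem_univ j) hj
    exact hinv.ne_zero h0
  have hd0 : (0:ℝ) < dm m 0 := by
    have h2 : (2:ℝ) ≤ m := by exact_mod_cast hm
    have hde : dm m 0 = (m:ℝ) - 1 := by simp [dm]
    rw [hde]; linarith
  have hdi : ∀ i : Fin m, i ≠ 0 → dm m i = -1 := fun i hi => by simp [dm, hi]
  refine ⟨?_, ?_, ?_⟩
  · rw [count_transfer _ _ mset (fun x => 0 < x), card_filter_prod]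
    have key : ∀ i : Fin m, (Finset.univ.filter fun j => 0 < dm m i * lam j).card
        = if i = 0 then q else n - q := by
      intro i
      rcases eq_or_ne i 0 with rfl | hi
      · rw [if_pos rfl, ← hpos]
        congr 1
        apply Finset.filter_congr
        intro j _
        constructor
        · intro h; by_contra h'; push_neg at h'; nlinarith
        · exact fun h => mul_pos hd0 h
      · rw [if_neg hi, ← hneg]
        congr 1
        apply Finset.filter_congr
        intro j _
        rw [hdi i hi]
        constructor
        · intro h; nlinarith
        · intro h; nlinarith
    rw [Finset.sum_congr rfl fun i _ => key i, sum_if_zero]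
  · rw [count_transfer _ _ mset (fun x => x < 0), card_filter_prod]
    have key : ∀ i : Fin m, (Finset.univ.filter fun j => dm m i * lam j < 0).card
        = if i = 0 then n - q else q := by
      intro i
      rcases eq_or_ne i 0 with rfl | hi
      · rw [if_pos rfl, ← hneg]
        congr 1
        apply Finset.filter_congr
        intro j _
        constructor
        · intro h; by_contra h'; push_neg at h'; nlinarith
        · intro h; nlinarith
      · rw [if_neg hi, ← hpos]
        congr 1
        apply Finset.filter_congr
        intro j _
        rw [hdi i hi]
        constructor
        · intro h; nlinarith
        · intro h; nlinarith
    rw [Finset.sum_congr rfl fun i _ => key i, sum_if_zero, Nat.mul_comm]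
  · rw [count_transfer _ _ mset (fun x => x = 0)]
    rw [Finset.card_eq_zero, Finset.filter_eq_empty_iff]
    intro p _
    rcases eq_or_ne p.1 0 with h | h
    · rw [h]; exact mul_ne_zero (ne_of_gt hd0) (hlam_ne p.2)
    · rw [hdi p.1 h]; exact mul_ne_zero (by norm_num) (hlam_ne p.2)
end

section
/- Let m = 3 and suppose G₁₂, G₁₃, G₂₃ are invertible n×n matrices. Form the 3n×3n symmetric matrix G with zero diagonal blocks and blocks G_{ij} (G_{ji} = G_{ij}ᵀ). Set A = G₁₂ G₃₂⁻¹ G₃₁ where G₃₂ = G₂₃ᵀ, G₃₁ = G₁₃ᵀ. If A + Aᵀ has signature (r₊, r₋, n - r₊ - r₋), then G has signature (n + r₋, n + r₊, n - r₊ - r₋). -/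
open Matrix

/-- The symmetric `3n × 3n` block matrix with zero diagonal blocks and
off-diagonal blocks `G₁₂, G₁₃, G₂₃` (and their transposes below the diagonal). -/
def block3 (n : ℕ) (G12 G13 G23 : Matrix (Fin n) (Fin n) ℝ) :
    Matrix ((Fin n ⊕ Fin n) ⊕ Fin n) ((Fin n ⊕ Fin n) ⊕ Fin n) ℝ :=
  Matrix.fromBlocks (Matrix.fromBlocks 0 G12 G12ᵀ 0)
    (Matrix.fromRows G13 G23) (Matrix.fromCols G13ᵀ G23ᵀ) 0

section Aux
open Finset

variable {ι : Type*} [Fintype ι] [DecidableEq ι]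

lemma sylvester_le (d e : ι → ℝ) (P : Matrix ι ι ℝ) (hP : IsUnit P.det)
    (h : diagonal e = Pᵀ * diagonal d * P) :
    (univ.filter fun i => 0 < e i).card ≤ (univ.filter fun i => 0 < d i).card := by
  classical
  set ext : ({i // 0 < e i} → ℝ) → (ι → ℝ) :=
    fun x i => if h : 0 < e i then x ⟨i, h⟩ else 0 with hext
  have extadd : ∀ x y, ext (x + y) = ext x + ext y := by
    intro x y; funext i; by_cases h : 0 < e i <;> simp [hext, h]
  have extsmul : ∀ (c : ℝ) x, ext (c • x) = c • ext x := by
    intro c x; funext i; by_cases h : 0 < e i <;> simp [hext, h]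
  let L : ({i // 0 < e i} → ℝ) →ₗ[ℝ] ({i // 0 < d i} → ℝ) :=
    { toFun := fun x j => P.mulVec (ext x) j.1
      map_add' := by intro x y; funext j; simp [extadd, mulVec_add]
      map_smul' := by intro c x; funext j; simp [extsmul, mulVec_smul] }
  have hinj : Function.Injective L := by
    rw [← LinearMap.ker_eq_bot, LinearMap.ker_eq_bot']
    intro x hx
    have hx' : ∀ j : {i // 0 < d i}, P.mulVec (ext x) j.1 = 0 := fun j =>
      congrFun hx j
    have key : (ext x) ⬝ᵥ (diagonal e).mulVec (ext x)
        = (P.mulVec (ext x)) ⬝ᵥ (diagonal d).mulVec (P.mulVec (ext x)) := by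
      rw [h, ← mulVec_mulVec, ← mulVec_mulVec, dotProduct_mulVec, vecMul_transpose]
    have lhs_eq : (ext x) ⬝ᵥ (diagonal e).mulVec (ext x)
        = ∑ i, ext x i * (e i * ext x i) := by
      simp [dotProduct, mulVec_diagonal]
    have rhs_nonpos : (P.mulVec (ext x)) ⬝ᵥ (diagonal d).mulVec (P.mulVec (ext x)) ≤ 0 := by
      rw [show (P.mulVec (ext x)) ⬝ᵥ (diagonal d).mulVec (P.mulVec (ext x))
          = ∑ i, P.mulVec (ext x) i * (d i * P.mulVec (ext x) i) by
        simp [dotProduct, mulVec_diagonal]]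
      apply Finset.sum_nonpos
      intro i _
      by_cases hdi : 0 < d i
      · rw [hx' ⟨i, hdi⟩]; simp
      · push_neg at hdi
        nlinarith [mul_self_nonneg (P.mulVec (ext x) i), hdi]
    have term_nonneg : ∀ i ∈ (univ : Finset ι), 0 ≤ ext x i * (e i * ext x i) := by
      intro i _
      by_cases h : 0 < e i
      · have : ext x i * (e i * ext x i) = e i * (ext x i * ext x i) := by ring
        rw [this]; exact mul_nonneg h.le (mul_self_nonneg _)
      · simp [hext, h]
    have sum_zero : ∑ i, ext x i * (e i * ext x i) = 0 := by
      have h1 : ∑ i, ext x i * (e i * ext x i) ≤ 0 := by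
        rw [← lhs_eq, key]; exact rhs_nonpos
      have h2 : 0 ≤ ∑ i, ext x i * (e i * ext x i) := Finset.sum_nonneg term_nonneg
      linarith
    funext j
    have hz := (Finset.sum_eq_zero_iff_of_nonneg term_nonneg).1 sum_zero j.1 (mem_univ _)
    have hj : ext x j.1 = x j := by simp [hext, j.2]
    rw [hj] at hz
    show x j = 0
    by_contra hne
    nlinarith [mul_self_pos.2 hne, j.2]
  have := LinearMap.finrank_le_finrank_of_injective hinj
  rwa [Module.finrank_fintype_fun_eq_card, Module.finrank_fintype_fun_eq_card,
    Fintype.card_subtype, Fintype.card_subtype] at this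

lemma sylvester_eq (d e : ι → ℝ) (P : Matrix ι ι ℝ) (hP : IsUnit P.det)
    (h : diagonal e = Pᵀ * diagonal d * P) :
    ((univ.filter fun i => 0 < e i).card = (univ.filter fun i => 0 < d i).card) ∧
    ((univ.filter fun i => e i < 0).card = (univ.filter fun i => d i < 0).card) := by
  have h' : diagonal d = (P⁻¹)ᵀ * diagonal e * P⁻¹ := by
    rw [h, transpose_nonsing_inv, ← Matrix.mul_assoc, ← Matrix.mul_assoc,
      Matrix.nonsing_inv_mul _ (isUnit_det_transpose P hP), Matrix.one_mul,
      Matrix.mul_assoc, Matrix.mul_nonsing_inv _ hP, Matrix.mul_one]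
  have hP' : IsUnit (P⁻¹).det := isUnit_nonsing_inv_det _ hP
  have hneg : diagonal (fun i => -e i) = Pᵀ * diagonal (fun i => -d i) * P := by
    have : (diagonal fun i => -e i) = -diagonal e := by simp [diagonal_neg]
    rw [this, h]
    have : (diagonal fun i => -d i) = -diagonal d := by simp [diagonal_neg]
    rw [this, Matrix.mul_neg, Matrix.neg_mul]
  have hneg' : diagonal (fun i => -d i) = (P⁻¹)ᵀ * diagonal (fun i => -e i) * P⁻¹ := by
    have : (diagonal fun i => -d i) = -diagonal d := by simp [diagonal_neg]
    rw [this, h']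
    have : (diagonal fun i => -e i) = -diagonal e := by simp [diagonal_neg]
    rw [this, Matrix.mul_neg, Matrix.neg_mul]
  refine ⟨le_antisymm (sylvester_le d e P hP h) (sylvester_le e d P⁻¹ hP' h'), ?_⟩
  have k1 := sylvester_le (fun i => -d i) (fun i => -e i) P hP hneg
  have k2 := sylvester_le (fun i => -e i) (fun i => -d i) P⁻¹ hP' hneg'
  simp only [neg_pos] at k1 k2
  exact le_antisymm k1 k2

lemma unitary_isUnit_det (U : Matrix ι ι ℝ) (hU : U ∈ Matrix.unitaryGroup ι ℝ) :
    IsUnit U.det := by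
  have h : star U * U = 1 := hU.1
  have := congrArg Matrix.det h
  rw [Matrix.det_mul, Matrix.det_one] at this
  exact IsUnit.of_mul_eq_one _ (mul_comm (U.det) _ ▸ this)

/-- If a real symmetric matrix is congruent to a diagonal matrix, the sign counts of its
eigenvalues equal the sign counts of the diagonal entries. -/
lemma eigencount (M : Matrix ι ι ℝ) (hM : M.IsHermitian) (d : ι → ℝ)
    (P : Matrix ι ι ℝ) (hP : IsUnit P.det) (h : M = Pᵀ * diagonal d * P) :
    ((univ.filter fun i => 0 < hM.eigenvalues i).card
        = (univ.filter fun i => 0 < d i).card) ∧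
    ((univ.filter fun i => hM.eigenvalues i < 0).card
        = (univ.filter fun i => d i < 0).card) := by
  classical
  set U : Matrix ι ι ℝ := (hM.eigenvectorUnitary : Matrix ι ι ℝ) with hUdef
  have hUmem : U ∈ Matrix.unitaryGroup ι ℝ := hM.eigenvectorUnitary.2
  have hspec : diagonal hM.eigenvalues = star U * M * U := by
    have := hM.conjStarAlgAut_star_eigenvectorUnitary
    rw [Unitary.conjStarAlgAut_star_apply, RCLike.ofReal_real_eq_id] at this
    simpa using this.symm
  have hstar : star U = Uᵀ := by
    rw [Matrix.star_eq_conjTranspose, Matrix.conjTranspose_eq_transpose_of_trivial]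
  have hcong : diagonal hM.eigenvalues = (P * U)ᵀ * diagonal d * (P * U) := by
    rw [hspec, hstar, h, Matrix.transpose_mul]
    noncomm_ring
  have hPU : IsUnit (P * U).det := by
    rw [Matrix.det_mul]; exact hP.mul (unitary_isUnit_det U hUmem)
  exact sylvester_eq d hM.eigenvalues (P * U) hPU hcong

lemma card_filter_sum_type {α β : Type*} [Fintype α] [Fintype β]
    (p : α ⊕ β → Prop) [DecidablePred p] :
    (univ.filter p).card = (univ.filter fun a => p (Sum.inl a)).card
      + (univ.filter fun b => p (Sum.inr b)).card := by
  classical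
  rw [Finset.card_filter, Finset.card_filter, Finset.card_filter, Fintype.sum_sum_type]

lemma trichotomy_card (f : ι → ℝ) :
    (univ.filter fun i => 0 < f i).card + (univ.filter fun i => f i < 0).card
      + (univ.filter fun i => f i = 0).card = Fintype.card ι := by
  classical
  rw [Finset.card_filter, Finset.card_filter, Finset.card_filter,
    ← Finset.sum_add_distrib, ← Finset.sum_add_distrib, ← Finset.card_univ,
    Finset.card_eq_sum_ones]
  refine Finset.sum_congr rfl fun i _ => ?_
  rcases lt_trichotomy (f i) 0 with h | h | h
  · simp [h, h.ne, not_lt.2 h.le]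
  · simp [h]
  · simp [h, h.ne', not_lt.2 h.le]


variable {n : ℕ}

-- abbreviations used below
lemma halves_smul (B : Matrix (Fin n) (Fin n) ℝ) :
    (1/2 : ℝ) • B + (1/2 : ℝ) • B = B := by
  rw [← add_smul]; norm_num

/-- Congruence of the hyperbolic block to a diagonal matrix. -/
lemma hyperbolic_congr (G12 : Matrix (Fin n) (Fin n) ℝ) :
    fromBlocks 0 G12 G12ᵀ 0 =
      (fromBlocks 1 G12 1 (-G12))ᵀ *
        fromBlocks ((1/2 : ℝ) • 1) 0 0 (-((1/2 : ℝ) • 1)) *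
        (fromBlocks 1 G12 1 (-G12)) := by
  rw [fromBlocks_transpose, fromBlocks_multiply, fromBlocks_multiply]
  rw [fromBlocks_inj]
  refine ⟨?_, ?_, ?_, ?_⟩ <;>
    simp [Matrix.smul_mul, Matrix.mul_smul, mul_smul_comm, smul_mul_assoc,
      Matrix.mul_neg, Matrix.neg_mul] <;> module


section Pieces
variable {n : ℕ} (G12 G13 G23 : Matrix (Fin n) (Fin n) ℝ)



variable {n : ℕ} (G12 G13 G23 : Matrix (Fin n) (Fin n) ℝ)

/-- Schur-complement congruence step. -/
lemma schur_step (h12 : IsUnit G12.det) :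
    block3 n G12 G13 G23 =
      (fromBlocks 1 (fromRows ((G12ᵀ)⁻¹ * G23) (G12⁻¹ * G13)) 0 1)ᵀ *
        fromBlocks (fromBlocks 0 G12 G12ᵀ 0) 0 0
          (-(G23ᵀ * (G12⁻¹ * G13) + G13ᵀ * ((G12ᵀ)⁻¹ * G23)))
            * (fromBlocks 1 (fromRows ((G12ᵀ)⁻¹ * G23) (G12⁻¹ * G13)) 0 1) := by
  have h12t : IsUnit (G12ᵀ).det := (Matrix.isUnit_det_transpose _ h12)
  set K : Matrix (Fin n ⊕ Fin n) (Fin n) ℝ :=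
    fromRows ((G12ᵀ)⁻¹ * G23) (G12⁻¹ * G13) with hK
  set M' : Matrix (Fin n ⊕ Fin n) (Fin n ⊕ Fin n) ℝ := fromBlocks 0 G12 G12ᵀ 0 with hM'
  have hMK : M' * K = fromRows G13 G23 := by
    rw [hM', hK, fromBlocks_mul_fromRows]
    simp [Matrix.mul_nonsing_inv_cancel_left _ _ h12, Matrix.mul_nonsing_inv_cancel_left _ _ h12t]
  have hKt : Kᵀ = fromCols (G23ᵀ * G12⁻¹) (G13ᵀ * (G12ᵀ)⁻¹) := by
    rw [hK, transpose_fromRows, Matrix.transpose_mul, Matrix.transpose_mul,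
      Matrix.transpose_nonsing_inv, Matrix.transpose_nonsing_inv, Matrix.transpose_transpose]
  have hMs : M'ᵀ = M' := by rw [hM', fromBlocks_transpose]; simp
  have hKM : Kᵀ * M' = fromCols G13ᵀ G23ᵀ :=
    calc Kᵀ * M' = (M' * K)ᵀ := by rw [Matrix.transpose_mul, hMs]
    _ = fromCols G13ᵀ G23ᵀ := by rw [hMK, transpose_fromRows]
  have hKC : Kᵀ * fromRows G13 G23 = G23ᵀ * (G12⁻¹ * G13) + G13ᵀ * ((G12ᵀ)⁻¹ * G23) := by
    rw [hKt, fromCols_mul_fromRows, Matrix.mul_assoc, Matrix.mul_assoc]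
  rw [fromBlocks_transpose, fromBlocks_multiply, fromBlocks_multiply]
  simp only [transpose_one, transpose_zero, Matrix.one_mul, Matrix.mul_one, Matrix.zero_mul,
    Matrix.mul_zero, add_zero, zero_add, Matrix.mul_assoc]
  rw [hMK, hKM, hKC]
  simp only [block3, hM']
  rw [fromBlocks_inj]
  refine ⟨rfl, rfl, rfl, by abel⟩


lemma S3_congr (h12 : IsUnit G12.det) (h13 : IsUnit G13.det) (h23 : IsUnit G23.det)
    (A : Matrix (Fin n) (Fin n) ℝ) (hAdef : A = G12 * (G23ᵀ)⁻¹ * G13ᵀ)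
    (hS : (A + Aᵀ).IsHermitian) :
    -(G23ᵀ * (G12⁻¹ * G13) + G13ᵀ * ((G12ᵀ)⁻¹ * G23)) =
      ((hS.eigenvectorUnitary : Matrix (Fin n) (Fin n) ℝ)ᵀ * (A⁻¹ * G13))ᵀ *
        diagonal (fun i => -hS.eigenvalues i) *
        ((hS.eigenvectorUnitary : Matrix (Fin n) (Fin n) ℝ)ᵀ * (A⁻¹ * G13)) := by
  have h13t : IsUnit (G13ᵀ).det := isUnit_det_transpose _ h13
  have h23t : IsUnit (G23ᵀ).det := isUnit_det_transpose _ h23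
  have hA : IsUnit A.det := by
    rw [hAdef, Matrix.det_mul, Matrix.det_mul]
    exact (h12.mul (isUnit_nonsing_inv_det _ h23t)).mul h13t
  set U : Matrix (Fin n) (Fin n) ℝ := (hS.eigenvectorUnitary : Matrix (Fin n) (Fin n) ℝ)
    with hU
  have hAinv : A⁻¹ = (G13ᵀ)⁻¹ * (G23ᵀ * G12⁻¹) := by
    rw [hAdef, Matrix.mul_inv_rev, Matrix.mul_inv_rev,
      Matrix.nonsing_inv_nonsing_inv _ h23t]
  have hAinvT : (A⁻¹)ᵀ = (G12ᵀ)⁻¹ * G23 * G13⁻¹ := by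
    rw [hAinv, Matrix.transpose_mul, Matrix.transpose_mul, Matrix.transpose_nonsing_inv,
      Matrix.transpose_nonsing_inv, Matrix.transpose_transpose, Matrix.transpose_transpose]
  -- spectral decomposition of A + Aᵀ
  have hspec : A + Aᵀ = U * diagonal hS.eigenvalues * Uᵀ := by
    have h := hS.spectral_theorem
    rw [RCLike.ofReal_real_eq_id] at h
    rw [Unitary.conjStarAlgAut_apply, Matrix.star_eq_conjTranspose, Matrix.conjTranspose_eq_transpose_of_trivial] at h
    simpa using h
  have hneg : U * diagonal (fun i => -hS.eigenvalues i) * Uᵀ = -(A + Aᵀ) := by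
    have : diagonal (fun i => -hS.eigenvalues i) = -diagonal hS.eigenvalues := by
      simp [diagonal_neg]
    rw [this, Matrix.mul_neg, Matrix.neg_mul, ← hspec]
  -- main computation
  have key : (A⁻¹ * G13)ᵀ * (A + Aᵀ) * (A⁻¹ * G13)
      = G23ᵀ * (G12⁻¹ * G13) + G13ᵀ * ((G12ᵀ)⁻¹ * G23) := by
    have e1 : (A⁻¹ * G13)ᵀ * A * (A⁻¹ * G13) = G13ᵀ * ((G12ᵀ)⁻¹ * G23) := by
      have step : (A⁻¹ * G13)ᵀ * A * (A⁻¹ * G13) = G13ᵀ * ((A⁻¹)ᵀ * (A * A⁻¹)) * G13 := by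
        rw [Matrix.transpose_mul]; noncomm_ring
      rw [step, Matrix.mul_nonsing_inv _ hA, Matrix.mul_one, hAinvT]
      have step2 : G13ᵀ * ((G12ᵀ)⁻¹ * G23 * G13⁻¹) * G13
          = G13ᵀ * ((G12ᵀ)⁻¹ * G23) * (G13⁻¹ * G13) := by noncomm_ring
      rw [step2, Matrix.nonsing_inv_mul _ h13, Matrix.mul_one]
    have e2 : (A⁻¹ * G13)ᵀ * Aᵀ * (A⁻¹ * G13) = G23ᵀ * (G12⁻¹ * G13) := by
      have hAtinv : (A⁻¹)ᵀ * Aᵀ = 1 := by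
        rw [← Matrix.transpose_mul, Matrix.mul_nonsing_inv _ hA, transpose_one]
      have step : (A⁻¹ * G13)ᵀ * Aᵀ * (A⁻¹ * G13) = G13ᵀ * (((A⁻¹)ᵀ * Aᵀ) * A⁻¹) * G13 := by
        rw [Matrix.transpose_mul]; noncomm_ring
      rw [step, hAtinv, Matrix.one_mul, hAinv,
        Matrix.mul_nonsing_inv_cancel_left _ _ h13t, Matrix.mul_assoc]
    calc (A⁻¹ * G13)ᵀ * (A + Aᵀ) * (A⁻¹ * G13)
        = (A⁻¹ * G13)ᵀ * A * (A⁻¹ * G13) + (A⁻¹ * G13)ᵀ * Aᵀ * (A⁻¹ * G13) := by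
          rw [Matrix.mul_add, Matrix.add_mul]
      _ = G23ᵀ * (G12⁻¹ * G13) + G13ᵀ * ((G12ᵀ)⁻¹ * G23) := by rw [e1, e2, add_comm]
  calc -(G23ᵀ * (G12⁻¹ * G13) + G13ᵀ * ((G12ᵀ)⁻¹ * G23))
      = (A⁻¹ * G13)ᵀ * (-(A + Aᵀ)) * (A⁻¹ * G13) := by
        rw [Matrix.mul_neg, Matrix.neg_mul, key]
    _ = (A⁻¹ * G13)ᵀ * (U * diagonal (fun i => -hS.eigenvalues i) * Uᵀ) * (A⁻¹ * G13) := by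
        rw [hneg]
    _ = (Uᵀ * (A⁻¹ * G13))ᵀ * diagonal (fun i => -hS.eigenvalues i) * (Uᵀ * (A⁻¹ * G13)) := by
        simp only [Matrix.transpose_mul, Matrix.transpose_transpose, Matrix.mul_assoc]

end Pieces
end Aux

/-- with `G₁₂, G₁₃, G₂₃` invertible and
`A = G₁₂ G₃₂⁻¹ G₃₁` (`G₃₂ = G₂₃ᵀ`, `G₃₁ = G₁₃ᵀ`), if `A + Aᵀ` has signature
`(rp, rm, n - rp - rm)` then `G` has signature `(n + rm, n + rp, n - rp - rm)`. -/
theorem stmt6 (n rp rm : ℕ) (G12 G13 G23 : Matrix (Fin n) (Fin n) ℝ)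
    (h12 : IsUnit G12.det) (h13 : IsUnit G13.det) (h23 : IsUnit G23.det)
    (A : Matrix (Fin n) (Fin n) ℝ) (hAdef : A = G12 * (G23ᵀ)⁻¹ * G13ᵀ)
    (hS : (A + Aᵀ).IsHermitian)
    (hrp : (Finset.univ.filter fun i => 0 < hS.eigenvalues i).card = rp)
    (hrm : (Finset.univ.filter fun i => hS.eigenvalues i < 0).card = rm)
    (hG : (block3 n G12 G13 G23).IsHermitian) :
    (Finset.univ.filter fun i : (Fin n ⊕ Fin n) ⊕ Fin n =>
        0 < hG.eigenvalues i).card = n + rm ∧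
    (Finset.univ.filter fun i : (Fin n ⊕ Fin n) ⊕ Fin n =>
        hG.eigenvalues i < 0).card = n + rp ∧
    (Finset.univ.filter fun i : (Fin n ⊕ Fin n) ⊕ Fin n =>
        hG.eigenvalues i = 0).card = n - rp - rm := by
  classical
  have h12t : IsUnit (G12ᵀ).det := isUnit_det_transpose _ h12
  have h13t : IsUnit (G13ᵀ).det := isUnit_det_transpose _ h13
  have h23t : IsUnit (G23ᵀ).det := isUnit_det_transpose _ h23
  have hA : IsUnit A.det := by
    rw [hAdef, Matrix.det_mul, Matrix.det_mul]
    exact (h12.mul (isUnit_nonsing_inv_det _ h23t)).mul h13t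
  set U : Matrix (Fin n) (Fin n) ℝ := (hS.eigenvectorUnitary : Matrix (Fin n) (Fin n) ℝ)
    with hU
  set W : Matrix (Fin n ⊕ Fin n) (Fin n ⊕ Fin n) ℝ := fromBlocks 1 G12 1 (-G12) with hW
  set Y : Matrix (Fin n) (Fin n) ℝ := Uᵀ * (A⁻¹ * G13) with hY
  set K : Matrix (Fin n ⊕ Fin n) (Fin n) ℝ :=
    fromRows ((G12ᵀ)⁻¹ * G23) (G12⁻¹ * G13) with hK
  set Q1 : Matrix ((Fin n ⊕ Fin n) ⊕ Fin n) ((Fin n ⊕ Fin n) ⊕ Fin n) ℝ :=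
    fromBlocks 1 K 0 1 with hQ1
  set R : Matrix ((Fin n ⊕ Fin n) ⊕ Fin n) ((Fin n ⊕ Fin n) ⊕ Fin n) ℝ :=
    fromBlocks W 0 0 Y with hR
  set dvec : (Fin n ⊕ Fin n) ⊕ Fin n → ℝ :=
    Sum.elim (Sum.elim (fun _ : Fin n => (1/2 : ℝ)) fun _ : Fin n => -(1/2 : ℝ))
      (fun i => -hS.eigenvalues i) with hdvec
  have hd : diagonal dvec =
      fromBlocks (fromBlocks ((1/2 : ℝ) • 1) 0 0 (-((1/2 : ℝ) • 1))) 0 0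
        (diagonal fun i => -hS.eigenvalues i) := by
    rw [hdvec, ← fromBlocks_diagonal, ← fromBlocks_diagonal]
    rw [smul_one_eq_diagonal, Matrix.diagonal_neg]
  have h2 : fromBlocks (fromBlocks 0 G12 G12ᵀ 0) 0 0
      (-(G23ᵀ * (G12⁻¹ * G13) + G13ᵀ * ((G12ᵀ)⁻¹ * G23)))
        = Rᵀ * diagonal dvec * R := by
    rw [hd, hR, fromBlocks_transpose, fromBlocks_multiply, fromBlocks_multiply]
    simp only [transpose_zero, Matrix.zero_mul, Matrix.mul_zero, add_zero, zero_add]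
    rw [fromBlocks_inj]
    exact ⟨hyperbolic_congr G12, rfl, rfl, S3_congr G12 G13 G23 h12 h13 h23 A hAdef hS⟩
  have key : block3 n G12 G13 G23 = (R * Q1)ᵀ * diagonal dvec * (R * Q1) := by
    rw [schur_step G12 G13 G23 h12, ← hK, ← hQ1, h2, Matrix.transpose_mul]
    noncomm_ring
  have hdetW : IsUnit W.det := by
    apply Matrix.isUnit_det_of_right_inverse (B :=
      fromBlocks ((1/2 : ℝ) • 1) ((1/2 : ℝ) • 1) ((1/2 : ℝ) • G12⁻¹) (-((1/2 : ℝ) • G12⁻¹)))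
    rw [hW, fromBlocks_multiply, ← fromBlocks_one, fromBlocks_inj]
    refine ⟨?_, ?_, ?_, ?_⟩ <;>
      simp only [Matrix.one_mul, Matrix.neg_mul, Matrix.mul_neg, neg_neg,
        mul_smul_comm, Matrix.mul_nonsing_inv _ h12] <;> module
  have hdetY : IsUnit Y.det := by
    rw [hY, Matrix.det_mul, Matrix.det_mul]
    exact (isUnit_det_transpose _ (unitary_isUnit_det U hS.eigenvectorUnitary.2)).mul
      ((isUnit_nonsing_inv_det _ hA).mul h13)
  have hdetQ1 : IsUnit Q1.det := by
    rw [hQ1, det_fromBlocks_zero₂₁]; simp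
  have hdetR : IsUnit R.det := by
    rw [hR, det_fromBlocks_zero₂₁]; exact hdetW.mul hdetY
  have hdetRQ : IsUnit (R * Q1).det := by
    rw [Matrix.det_mul]; exact hdetR.mul hdetQ1
  obtain ⟨hpos, hneg⟩ := eigencount _ hG dvec (R * Q1) hdetRQ key
  have c1 : (Finset.univ.filter fun _ : Fin n => 0 < (1/2 : ℝ)).card = n := by
    rw [Finset.filter_true_of_mem (fun _ _ => by norm_num), Finset.card_univ, Fintype.card_fin]
  have c2 : (Finset.univ.filter fun _ : Fin n => (0:ℝ) < -(1/2)).card = 0 := by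
    rw [Finset.filter_false_of_mem (fun _ _ => by norm_num), Finset.card_empty]
  have c3 : (Finset.univ.filter fun _ : Fin n => (1/2 : ℝ) < 0).card = 0 := by
    rw [Finset.filter_false_of_mem (fun _ _ => by norm_num), Finset.card_empty]
  have c4 : (Finset.univ.filter fun _ : Fin n => -(1/2 : ℝ) < 0).card = n := by
    rw [Finset.filter_true_of_mem (fun _ _ => by norm_num), Finset.card_univ, Fintype.card_fin]
  have cpos : (Finset.univ.filter fun i => 0 < dvec i).card = n + rm := by
    rw [card_filter_sum_type, card_filter_sum_type]
    simp only [hdvec, Sum.elim_inl, Sum.elim_inr, neg_pos]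
    rw [c1, c3, hrm]
    omega
  have cneg : (Finset.univ.filter fun i => dvec i < 0).card = n + rp := by
    rw [card_filter_sum_type, card_filter_sum_type]
    simp only [hdvec, Sum.elim_inl, Sum.elim_inr, neg_lt_zero]
    rw [c3, c1, hrp]
    omega
  refine ⟨by rw [hpos, cpos], by rw [hneg, cneg], ?_⟩
  have t2 := trichotomy_card hG.eigenvalues
  rw [hpos, cpos, hneg, cneg] at t2
  have t1 := trichotomy_card hS.eigenvalues
  rw [hrp, hrm] at t1
  have hcard : Fintype.card ((Fin n ⊕ Fin n) ⊕ Fin n) = 3 * n := by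
    simp [Fintype.card_sum]; ring
  rw [hcard] at t2
  omega
end

section
/- Let G be an mn×mn symmetric block matrix with zero diagonal blocks, and suppose for some i ≠ j the block G_{ij} has rank r. Then G has at least r positive eigenvalues and at least r negative eigenvalues. -/
open Matrix

lemma inertia_pos {N : Type*} [Fintype N] [DecidableEq N]
    (A : Matrix N N ℝ) (hA : A.IsHermitian)
    (V : Submodule ℝ (N → ℝ))
    (hV : ∀ x ∈ V, x ≠ 0 → 0 < x ⬝ᵥ A *ᵥ x) :
    Module.finrank ℝ V ≤ (Finset.univ.filter fun k => 0 < hA.eigenvalues k).card := by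
  classical
  set b := hA.eigenvectorBasis with hb
  set P := (Finset.univ.filter fun k => 0 < hA.eigenvalues k) with hP
  -- dot products of basis vectors
  have hdot : ∀ k l : N, (b k : N → ℝ) ⬝ᵥ (b l : N → ℝ) = if k = l then 1 else 0 := by
    intro k l
    have := b.orthonormal
    rw [orthonormal_iff_ite] at this
    have h2 := this k l
    rw [PiLp.inner_apply] at h2
    simpa [dotProduct, mul_comm] using h2
  -- representation of any x in eigencoordinates
  have hrepr : ∀ x : N → ℝ, x = ∑ k, ((b k : N → ℝ) ⬝ᵥ x) • (b k : N → ℝ) := by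
    intro x
    have := b.sum_repr' (WithLp.toLp 2 x : EuclideanSpace ℝ N)
    have h2 : ∀ k, (inner ℝ (b k) (WithLp.toLp 2 x : EuclideanSpace ℝ N) : ℝ) = (b k : N → ℝ) ⬝ᵥ x := by
      intro k; rw [PiLp.inner_apply]; simp [dotProduct, mul_comm]
    calc x = ∑ k, (inner ℝ (b k) (WithLp.toLp 2 x : EuclideanSpace ℝ N) : ℝ) • (b k : N → ℝ) := by
              have h3 := congrArg WithLp.ofLp this
              simpa using h3.symm
      _ = ∑ k, ((b k : N → ℝ) ⬝ᵥ x) • (b k : N → ℝ) := by simp_rw [h2]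
  have dot_sum : ∀ (w : N → ℝ) (f : N → (N → ℝ)), w ⬝ᵥ (∑ l, f l) = ∑ l, w ⬝ᵥ f l := by
    intro w f
    simp only [dotProduct, Finset.sum_apply, Finset.mul_sum]
    exact Finset.sum_comm
  have sum_dot : ∀ (w : N → ℝ) (f : N → (N → ℝ)), (∑ l, f l) ⬝ᵥ w = ∑ l, f l ⬝ᵥ w := by
    intro w f
    simp only [dotProduct, Finset.sum_apply, Finset.sum_mul]
    exact Finset.sum_comm
  -- quadratic form in eigencoordinates
  have hq : ∀ x : N → ℝ, x ⬝ᵥ A *ᵥ x = ∑ k, hA.eigenvalues k * ((b k : N → ℝ) ⬝ᵥ x)^2 := by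
    intro x
    conv_lhs => rw [hrepr x]
    have hmv : A *ᵥ (∑ k, ((b k : N → ℝ) ⬝ᵥ x) • (b k : N → ℝ))
        = ∑ k, ((b k : N → ℝ) ⬝ᵥ x) • (hA.eigenvalues k • (b k : N → ℝ)) := by
      rw [← mulVecLin_apply, map_sum]
      refine Finset.sum_congr rfl fun k _ => ?_
      rw [LinearMap.map_smul, mulVecLin_apply]
      exact congrArg (fun y => ((b k : N → ℝ) ⬝ᵥ x) • y) (hA.mulVec_eigenvectorBasis k)
    rw [hmv, dot_sum]
    refine Finset.sum_congr rfl fun l _ => ?_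
    rw [dotProduct_smul, dotProduct_smul, sum_dot]
    have : ∀ l_1 : N, ((b l_1 : N → ℝ) ⬝ᵥ x) • (b l_1 : N → ℝ) ⬝ᵥ (b l : N → ℝ)
        = ((b l_1 : N → ℝ) ⬝ᵥ x) * (if l_1 = l then 1 else 0) := by
      intro l1
      rw [smul_dotProduct, hdot]
      simp
    simp_rw [this]
    simp only [mul_ite, mul_one, mul_zero, Finset.sum_ite_eq', Finset.mem_univ, if_true]
    simp only [smul_eq_mul]
    ring
  -- the nonpositive eigenspace span
  set W : Submodule ℝ (N → ℝ) :=
    Submodule.span ℝ (Set.range ((fun k : N => (b k : N → ℝ)) ∘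
      (Subtype.val : {k : N // k ∉ P} → N))) with hW
  have hlin : LinearIndependent ℝ ((fun k : N => (b k : N → ℝ)) ∘
      (Subtype.val : {k : N // k ∉ P} → N)) := by
    have h1 : LinearIndependent ℝ (fun k : N => (b k : N → ℝ)) := by
      apply LinearIndependent.of_comp (WithLp.linearEquiv 2 ℝ (N → ℝ)).symm.toLinearMap
      have e : (WithLp.linearEquiv 2 ℝ (N → ℝ)).symm.toLinearMap ∘ (fun k : N => (b k : N → ℝ))
          = ⇑b := by
        funext k; simp
      rw [e]; exact b.orthonormal.linearIndependent
    exact h1.comp _ Subtype.val_injective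
  have hWrank : Module.finrank ℝ W = Fintype.card N - P.card := by
    have h1 := finrank_span_eq_card hlin
    rw [hW]
    refine h1.trans ?_
    rw [Fintype.card_subtype_compl]
    congr 1
    simp [Fintype.card_subtype]
  -- coordinates vanish on W for k in P
  have hcoord : ∀ x ∈ W, ∀ k ∈ P, (b k : N → ℝ) ⬝ᵥ x = 0 := by
    intro x hx k hk
    induction hx using Submodule.span_induction with
    | mem y hy =>
        obtain ⟨l, rfl⟩ := hy
        show (b k : N → ℝ) ⬝ᵥ (b (l : N) : N → ℝ) = 0
        rw [hdot]
        simp only [ite_eq_right_iff]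
        intro h; exact absurd (h ▸ hk) l.2
    | zero => simp
    | add y z _ _ hy hz => rw [dotProduct_add, hy, hz, add_zero]
    | smul c y _ hy => rw [dotProduct_smul, hy, smul_zero]
  -- q is nonpositive on W
  have hWneg : ∀ x ∈ W, x ⬝ᵥ A *ᵥ x ≤ 0 := by
    intro x hx
    rw [hq]
    apply Finset.sum_nonpos
    intro k _
    by_cases hk : k ∈ P
    · rw [hcoord x hx k hk]; simp
    · have : hA.eigenvalues k ≤ 0 := by
        by_contra h
        exact hk (Finset.mem_filter.2 ⟨Finset.mem_univ k, lt_of_not_ge h⟩)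
      exact mul_nonpos_of_nonpos_of_nonneg this (sq_nonneg _)
  -- dimension count
  by_contra hcon
  push_neg at hcon
  have hinf : 0 < Module.finrank ℝ (V ⊓ W : Submodule ℝ (N → ℝ)) := by
    have h1 := Submodule.finrank_sup_add_finrank_inf_eq V W
    have h2 : Module.finrank ℝ (V ⊔ W : Submodule ℝ (N → ℝ)) ≤ Fintype.card N := by
      have := Submodule.finrank_le (V ⊔ W : Submodule ℝ (N → ℝ))
      simpa [Module.finrank_pi] using this
    have hPle : P.card ≤ Fintype.card N := by
      simpa using Finset.card_le_univ P
    omega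
  have hne : (V ⊓ W : Submodule ℝ (N → ℝ)) ≠ ⊥ := by
    intro h
    rw [h, finrank_bot] at hinf
    exact lt_irrefl 0 hinf
  obtain ⟨x, hxmem, hxne⟩ := Submodule.exists_mem_ne_zero_of_ne_bot hne
  exact absurd (hWneg x hxmem.2) (not_le.2 (hV x hxmem.1 hxne))

lemma inertia_neg {N : Type*} [Fintype N] [DecidableEq N]
    (A : Matrix N N ℝ) (hA : A.IsHermitian)
    (V : Submodule ℝ (N → ℝ))
    (hV : ∀ x ∈ V, x ≠ 0 → x ⬝ᵥ A *ᵥ x < 0) :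
    Module.finrank ℝ V ≤ (Finset.univ.filter fun k => hA.eigenvalues k < 0).card := by
  classical
  set b := hA.eigenvectorBasis with hb
  set P := (Finset.univ.filter fun k => hA.eigenvalues k < 0) with hP
  -- dot products of basis vectors
  have hdot : ∀ k l : N, (b k : N → ℝ) ⬝ᵥ (b l : N → ℝ) = if k = l then 1 else 0 := by
    intro k l
    have := b.orthonormal
    rw [orthonormal_iff_ite] at this
    have h2 := this k l
    rw [PiLp.inner_apply] at h2
    simpa [dotProduct, mul_comm] using h2
  -- representation of any x in eigencoordinates
  have hrepr : ∀ x : N → ℝ, x = ∑ k, ((b k : N → ℝ) ⬝ᵥ x) • (b k : N → ℝ) := by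
    intro x
    have := b.sum_repr' (WithLp.toLp 2 x : EuclideanSpace ℝ N)
    have h2 : ∀ k, (inner ℝ (b k) (WithLp.toLp 2 x : EuclideanSpace ℝ N) : ℝ) = (b k : N → ℝ) ⬝ᵥ x := by
      intro k; rw [PiLp.inner_apply]; simp [dotProduct, mul_comm]
    calc x = ∑ k, (inner ℝ (b k) (WithLp.toLp 2 x : EuclideanSpace ℝ N) : ℝ) • (b k : N → ℝ) := by
              have h3 := congrArg WithLp.ofLp this
              simpa using h3.symm
      _ = ∑ k, ((b k : N → ℝ) ⬝ᵥ x) • (b k : N → ℝ) := by simp_rw [h2]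
  have dot_sum : ∀ (w : N → ℝ) (f : N → (N → ℝ)), w ⬝ᵥ (∑ l, f l) = ∑ l, w ⬝ᵥ f l := by
    intro w f
    simp only [dotProduct, Finset.sum_apply, Finset.mul_sum]
    exact Finset.sum_comm
  have sum_dot : ∀ (w : N → ℝ) (f : N → (N → ℝ)), (∑ l, f l) ⬝ᵥ w = ∑ l, f l ⬝ᵥ w := by
    intro w f
    simp only [dotProduct, Finset.sum_apply, Finset.sum_mul]
    exact Finset.sum_comm
  -- quadratic form in eigencoordinates
  have hq : ∀ x : N → ℝ, x ⬝ᵥ A *ᵥ x = ∑ k, hA.eigenvalues k * ((b k : N → ℝ) ⬝ᵥ x)^2 := by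
    intro x
    conv_lhs => rw [hrepr x]
    have hmv : A *ᵥ (∑ k, ((b k : N → ℝ) ⬝ᵥ x) • (b k : N → ℝ))
        = ∑ k, ((b k : N → ℝ) ⬝ᵥ x) • (hA.eigenvalues k • (b k : N → ℝ)) := by
      rw [← mulVecLin_apply, map_sum]
      refine Finset.sum_congr rfl fun k _ => ?_
      rw [LinearMap.map_smul, mulVecLin_apply]
      exact congrArg (fun y => ((b k : N → ℝ) ⬝ᵥ x) • y) (hA.mulVec_eigenvectorBasis k)
    rw [hmv, dot_sum]
    refine Finset.sum_congr rfl fun l _ => ?_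
    rw [dotProduct_smul, dotProduct_smul, sum_dot]
    have : ∀ l_1 : N, ((b l_1 : N → ℝ) ⬝ᵥ x) • (b l_1 : N → ℝ) ⬝ᵥ (b l : N → ℝ)
        = ((b l_1 : N → ℝ) ⬝ᵥ x) * (if l_1 = l then 1 else 0) := by
      intro l1
      rw [smul_dotProduct, hdot]
      simp
    simp_rw [this]
    simp only [mul_ite, mul_one, mul_zero, Finset.sum_ite_eq', Finset.mem_univ, if_true]
    simp only [smul_eq_mul]
    ring
  -- the nonpositive eigenspace span
  set W : Submodule ℝ (N → ℝ) :=
    Submodule.span ℝ (Set.range ((fun k : N => (b k : N → ℝ)) ∘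
      (Subtype.val : {k : N // k ∉ P} → N))) with hW
  have hlin : LinearIndependent ℝ ((fun k : N => (b k : N → ℝ)) ∘
      (Subtype.val : {k : N // k ∉ P} → N)) := by
    have h1 : LinearIndependent ℝ (fun k : N => (b k : N → ℝ)) := by
      apply LinearIndependent.of_comp (WithLp.linearEquiv 2 ℝ (N → ℝ)).symm.toLinearMap
      have e : (WithLp.linearEquiv 2 ℝ (N → ℝ)).symm.toLinearMap ∘ (fun k : N => (b k : N → ℝ))
          = ⇑b := by
        funext k; simp
      rw [e]; exact b.orthonormal.linearIndependent
    exact h1.comp _ Subtype.val_injective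
  have hWrank : Module.finrank ℝ W = Fintype.card N - P.card := by
    have h1 := finrank_span_eq_card hlin
    rw [hW]
    refine h1.trans ?_
    rw [Fintype.card_subtype_compl]
    congr 1
    simp [Fintype.card_subtype]
  -- coordinates vanish on W for k in P
  have hcoord : ∀ x ∈ W, ∀ k ∈ P, (b k : N → ℝ) ⬝ᵥ x = 0 := by
    intro x hx k hk
    induction hx using Submodule.span_induction with
    | mem y hy =>
        obtain ⟨l, rfl⟩ := hy
        show (b k : N → ℝ) ⬝ᵥ (b (l : N) : N → ℝ) = 0
        rw [hdot]
        simp only [ite_eq_right_iff]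
        intro h; exact absurd (h ▸ hk) l.2
    | zero => simp
    | add y z _ _ hy hz => rw [dotProduct_add, hy, hz, add_zero]
    | smul c y _ hy => rw [dotProduct_smul, hy, smul_zero]
  -- q is nonnegative on W
  have hWneg : ∀ x ∈ W, 0 ≤ x ⬝ᵥ A *ᵥ x := by
    intro x hx
    rw [hq]
    apply Finset.sum_nonneg
    intro k _
    by_cases hk : k ∈ P
    · rw [hcoord x hx k hk]; simp
    · have : 0 ≤ hA.eigenvalues k := by
        by_contra h
        exact hk (Finset.mem_filter.2 ⟨Finset.mem_univ k, lt_of_not_ge h⟩)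
      exact mul_nonneg this (sq_nonneg _)
  -- dimension count
  by_contra hcon
  push_neg at hcon
  have hinf : 0 < Module.finrank ℝ (V ⊓ W : Submodule ℝ (N → ℝ)) := by
    have h1 := Submodule.finrank_sup_add_finrank_inf_eq V W
    have h2 : Module.finrank ℝ (V ⊔ W : Submodule ℝ (N → ℝ)) ≤ Fintype.card N := by
      have := Submodule.finrank_le (V ⊔ W : Submodule ℝ (N → ℝ))
      simpa [Module.finrank_pi] using this
    have hPle : P.card ≤ Fintype.card N := by
      simpa using Finset.card_le_univ P
    omega
  have hne : (V ⊓ W : Submodule ℝ (N → ℝ)) ≠ ⊥ := by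
    intro h
    rw [h, finrank_bot] at hinf
    exact lt_irrefl 0 hinf
  obtain ⟨x, hxmem, hxne⟩ := Submodule.exists_mem_ne_zero_of_ne_bot hne
  exact absurd (hWneg x hxmem.2) (not_le.2 (hV x hxmem.1 hxne))

/-- if a symmetric `mn × mn` block matrix with zero diagonal
blocks has an off-diagonal block of rank `r`, then it has at least `r` positive
and at least `r` negative eigenvalues. -/
theorem stmt10 (m n r : ℕ)
    (G : Matrix (Fin m × Fin n) (Fin m × Fin n) ℝ)
    (hdiag : ∀ p q : Fin m × Fin n, p.1 = q.1 → G p q = 0)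
    (hG : G.IsHermitian)
    (i j : Fin m) (hij : i ≠ j)
    (B : Matrix (Fin n) (Fin n) ℝ)
    (hB : ∀ a b : Fin n, B a b = G (i, a) (j, b))
    (hr : B.rank = r) :
    r ≤ (Finset.univ.filter fun p : Fin m × Fin n =>
          0 < hG.eigenvalues p).card ∧
    r ≤ (Finset.univ.filter fun p : Fin m × Fin n =>
          hG.eigenvalues p < 0).card := by
  classical
  -- the embedding of a vector into block k
  set emb : Fin m → (Fin n → ℝ) → (Fin m × Fin n → ℝ) :=
    fun k w p => if p.1 = k then w p.2 else 0 with hemb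
  have emb_dot : ∀ (k l : Fin m) (w z : Fin n → ℝ),
      emb k w ⬝ᵥ G *ᵥ emb l z = w ⬝ᵥ (Matrix.of fun a b => G (k, a) (l, b)) *ᵥ z := by
    intro k l w z
    simp only [dotProduct, mulVec, hemb, Fintype.sum_prod_type, Matrix.of_apply, dotProduct]
    simp only [ite_mul, zero_mul, mul_ite, mul_zero]
    simp only [Finset.sum_ite_irrel, Finset.sum_const_zero, Finset.sum_ite_eq',
      Finset.mem_univ, if_true]
  -- diagonal blocks vanish
  have hblk_diag : ∀ k : Fin m, (Matrix.of fun a b => G (k, a) (k, b)) = 0 := by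
    intro k; ext a b; exact hdiag (k, a) (k, b) rfl
  have hsymm : ∀ p q, G p q = G q p := by
    intro p q
    have := congrFun (congrFun hG p) q
    simpa [Matrix.conjTranspose_apply] using this.symm
  have hBij : (Matrix.of fun a b => G (i, a) (j, b)) = B := by
    ext a b; exact (hB a b).symm
  have hBji : (Matrix.of fun a b => G (j, a) (i, b)) = Bᵀ := by
    ext a b
    rw [Matrix.of_apply, Matrix.transpose_apply, hB, hsymm]
  -- the key quadratic form computation
  have key : ∀ (ε : ℝ) (v : Fin n → ℝ),
      (emb i (ε • (B *ᵥ v)) + emb j v) ⬝ᵥ G *ᵥ (emb i (ε • (B *ᵥ v)) + emb j v)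
        = 2 * ε * ((B *ᵥ v) ⬝ᵥ (B *ᵥ v)) := by
    intro ε v
    rw [Matrix.mulVec_add, dotProduct_add, add_dotProduct, add_dotProduct,
      emb_dot, emb_dot, emb_dot, emb_dot, hblk_diag i, hblk_diag j, hBij, hBji]
    rw [Matrix.zero_mulVec, Matrix.zero_mulVec, dotProduct_zero, dotProduct_zero]
    rw [smul_dotProduct, Matrix.mulVec_smul, dotProduct_smul]
    rw [Matrix.dotProduct_mulVec v Bᵀ, Matrix.vecMul_transpose]
    simp only [smul_eq_mul]
    ring
  -- the linear maps
  have mkPhi : ∀ ε : ℝ, ∃ Φ : (Fin n → ℝ) →ₗ[ℝ] (Fin m × Fin n → ℝ),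
      ∀ v, Φ v = emb i (ε • (B *ᵥ v)) + emb j v := by
    intro ε
    refine ⟨⟨⟨fun v => emb i (ε • (B *ᵥ v)) + emb j v, ?_⟩, ?_⟩, fun v => rfl⟩
    · intro v w
      funext p
      simp only [hemb, Matrix.mulVec_add, Pi.add_apply, Pi.smul_apply, smul_eq_mul]
      split_ifs <;> ring
    · intro c v
      funext p
      simp only [hemb, Matrix.mulVec_smul, Pi.add_apply, Pi.smul_apply, smul_eq_mul,
        RingHom.id_apply]
      split_ifs <;> ring
  -- the complement of the kernel
  obtain ⟨S, hS⟩ := Submodule.exists_isCompl (LinearMap.ker (Matrix.mulVecLin B))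
  have hSrank : Module.finrank ℝ S = r := by
    have h1 := LinearMap.finrank_range_add_finrank_ker (Matrix.mulVecLin B)
    have h2 := Submodule.finrank_add_eq_of_isCompl hS
    have h3 : Module.finrank ℝ (Fin n → ℝ) = n := by simp
    rw [Matrix.rank] at hr
    omega
  -- generic construction
  have main : ∀ ε : ℝ, ∃ V : Submodule ℝ (Fin m × Fin n → ℝ),
      Module.finrank ℝ V = r ∧
      ∀ x ∈ V, x ≠ 0 → x ⬝ᵥ G *ᵥ x = 2 * ε * ((B *ᵥ (fun b => x (j, b))) ⬝ᵥ
        (B *ᵥ (fun b => x (j, b)))) ∧ B *ᵥ (fun b => x (j, b)) ≠ 0 := by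
    intro ε
    obtain ⟨Φ, hΦ⟩ := mkPhi ε
    have hval : ∀ v b, Φ v (j, b) = v b := by
      intro v b
      rw [hΦ]
      show (if (j, b).1 = i then (ε • (B *ᵥ v)) (j, b).2 else 0)
          + (if (j, b).1 = j then v (j, b).2 else 0) = v b
      simp [hij.symm]
    have hinj : Function.Injective Φ := by
      intro v w h
      funext b
      rw [← hval v b, ← hval w b, h]
    refine ⟨Submodule.map Φ S, ?_, ?_⟩
    · rw [← (Submodule.equivMapOfInjective Φ hinj S).finrank_eq, hSrank]
    · rintro x ⟨v, hvS, rfl⟩ hxne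
      have hv0 : v ≠ 0 := by
        rintro rfl
        exact hxne (map_zero Φ)
      have hproj : (fun b => Φ v (j, b)) = v := funext fun b => hval v b
      have hBv : B *ᵥ v ≠ 0 := by
        intro h0
        have hker : v ∈ LinearMap.ker (Matrix.mulVecLin B) := by
          simpa [LinearMap.mem_ker, Matrix.mulVecLin_apply] using h0
        have : v ∈ (⊥ : Submodule ℝ (Fin n → ℝ)) := by
          rw [← hS.inf_eq_bot]
          exact ⟨hker, hvS⟩
        exact hv0 (by simpa using this)
      constructor
      · rw [hproj, hΦ]
        exact key ε v
      · rw [hproj]; exact hBv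
  have dps : ∀ u : Fin n → ℝ, u ≠ 0 → 0 < u ⬝ᵥ u := by
    intro u hu
    have h1 : 0 ≤ u ⬝ᵥ u := Finset.sum_nonneg fun k _ => mul_self_nonneg _
    rcases h1.lt_or_eq with h | h
    · exact h
    · exact absurd (dotProduct_self_eq_zero.1 h.symm) hu
  constructor
  · obtain ⟨V, hVr, hVq⟩ := main 1
    have hle := inertia_pos G hG V (fun x hx hxne => by
      obtain ⟨hq, hBv⟩ := hVq x hx hxne
      rw [hq]
      have := dps _ hBv
      nlinarith)
    rw [← hVr]
    exact hle
  · obtain ⟨V, hVr, hVq⟩ := main (-1)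
    have hle := inertia_neg G hG V (fun x hx hxne => by
      obtain ⟨hq, hBv⟩ := hVq x hx hxne
      rw [hq]
      have := dps _ hBv
      nlinarith)
    rw [← hVr]
    exact hle
end

section
/- Let c : ℝ^m → ℝ be C² with ∂²c/∂x_i∂x_j < 0 everywhere for all i ≠ j. If a set S ⊆ ℝ^m is c-monotone with respect to every partition of {1,...,m} into two nonempty sets, then for all x, y ∈ S and all i, (x₁ - y₁)(x_i - y_i) ≥ 0; i.e., the projection of S onto the (x₁, x_i)-plane is a monotone nondecreasing subset of ℝ². -/
open Finset Set

/-- Strict submodularity from negative mixed second partials. -/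
lemma stmt11_key (m : ℕ) (c : (Fin m → ℝ) → ℝ)
    (hc : ContDiff ℝ 2 c)
    (hmix : ∀ i j : Fin m, i ≠ j → ∀ x : Fin m → ℝ,
      iteratedFDeriv ℝ 2 c x ![Pi.single i 1, Pi.single j 1] < 0)
    (x y : Fin m → ℝ) (i0 i : Fin m)
    (h0 : y i0 < x i0) (hi : x i < y i) :
    c (fun j => max (x j) (y j)) + c (fun j => min (x j) (y j)) < c x + c y := by
  classical
  set a : Fin m → ℝ := fun j => min (x j) (y j) with ha
  set d : Fin m → ℝ := fun j => x j - a j with hdd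
  set e : Fin m → ℝ := fun j => y j - a j with hee
  have hne0 : i0 ≠ i := by intro h; rw [h] at h0; linarith
  have hd : ∀ j, 0 ≤ d j := fun j => by
    simp only [hdd, ha, sub_nonneg]; exact min_le_left _ _
  have he : ∀ j, 0 ≤ e j := fun j => by
    simp only [hee, ha, sub_nonneg]; exact min_le_right _ _
  have hde : ∀ j, d j = 0 ∨ e j = 0 := by
    intro j
    rcases min_choice (x j) (y j) with h | h
    · left; simp only [hdd, ha]; rw [h]; ring
    · right; simp only [hee, ha]; rw [h]; ring
  have hdi0 : 0 < d i0 := by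
    simp only [hdd, ha]; rw [min_eq_right h0.le]; linarith
  have hei : 0 < e i := by
    simp only [hee, ha]; rw [min_eq_left hi.le]; linarith
  have hdiff : Differentiable ℝ c := hc.differentiable (by norm_num)
  have hc1 : ContDiff ℝ 1 (fderiv ℝ c) := hc.fderiv_right (by norm_num)
  have hdiff' : Differentiable ℝ (fderiv ℝ c) := hc1.differentiable (by norm_num)
  -- expansion of a continuous linear functional on a Pi type
  have expand : ∀ (T : (Fin m → ℝ) →L[ℝ] ℝ) (u : Fin m → ℝ),
      T u = ∑ j, u j * T (Pi.single j 1) := by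
    intro T u
    conv_lhs => rw [← Finset.univ_sum_single u]
    rw [map_sum]
    refine Finset.sum_congr rfl fun j _ => ?_
    have h1 : Pi.single j (u j) = u j • (Pi.single j 1 : Fin m → ℝ) := by
      rw [← Pi.single_smul]; simp
    rw [h1, map_smul, smul_eq_mul]
  -- Step A: the second derivative along directions d, e is negative everywhere
  have hHneg : ∀ w, fderiv ℝ (fderiv ℝ c) w d e < 0 := by
    intro w
    set H := fderiv ℝ (fderiv ℝ c) w with hH
    have hjk : ∀ j k : Fin m, j ≠ k → H (Pi.single j 1) (Pi.single k 1) < 0 := by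
      intro j k hne
      have h2 := hmix j k hne w
      rwa [iteratedFDeriv_two_apply, Matrix.cons_val_zero, Matrix.cons_val_one,
        Matrix.cons_val_zero] at h2
    have hterm : ∀ j k : Fin m,
        d j * (e k * H (Pi.single j 1) (Pi.single k 1)) ≤ 0 := by
      intro j k
      by_cases hjk' : j = k
      · subst hjk'
        rcases hde j with h | h <;> simp [h]
      · have hle : e k * H (Pi.single j 1) (Pi.single k 1) ≤ 0 :=
          mul_nonpos_iff.2 (Or.inl ⟨he k, (hjk j k hjk').le⟩)
        exact mul_nonpos_iff.2 (Or.inl ⟨hd j, hle⟩)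
    have hstrict : d i0 * (e i * H (Pi.single i0 1) (Pi.single i 1)) < 0 :=
      mul_neg_of_pos_of_neg hdi0 (mul_neg_of_pos_of_neg hei (hjk i0 i hne0))
    have hcalc : H d e
        = ∑ j, ∑ k, d j * (e k * H (Pi.single j 1) (Pi.single k 1)) := by
      calc H d e = H.flip e d := by rw [ContinuousLinearMap.flip_apply]
        _ = ∑ j, d j * (H.flip e) (Pi.single j 1) := expand (H.flip e) d
        _ = ∑ j, d j * ∑ k, e k * H (Pi.single j 1) (Pi.single k 1) := by
            refine Finset.sum_congr rfl fun j _ => ?_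
            rw [ContinuousLinearMap.flip_apply, expand (H (Pi.single j 1)) e]
        _ = ∑ j, ∑ k, d j * (e k * H (Pi.single j 1) (Pi.single k 1)) := by
            simp_rw [Finset.mul_sum]
    rw [hcalc]
    have h1 : ∑ j, ∑ k, d j * (e k * H (Pi.single j 1) (Pi.single k 1))
        < ∑ _j : Fin m, (0 : ℝ) := by
      refine Finset.sum_lt_sum (fun j _ => Finset.sum_nonpos fun k _ => hterm j k)
        ⟨i0, Finset.mem_univ _, ?_⟩
      have h2 : ∑ k, d i0 * (e k * H (Pi.single i0 1) (Pi.single k 1))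
          < ∑ _k : Fin m, (0 : ℝ) :=
        Finset.sum_lt_sum (fun k _ => hterm i0 k) ⟨i, Finset.mem_univ _, hstrict⟩
      simpa using h2
    simpa using h1
  -- Step B: derivatives along the interpolation square
  set γ : ℝ → ℝ → (Fin m → ℝ) := fun s t => a + s • d + t • e with hγ
  have hlineS : ∀ t s : ℝ, HasDerivAt (fun s => γ s t) d s := by
    intro t s
    have h1 : HasDerivAt (fun s : ℝ => s • d) ((1 : ℝ) • d) s :=
      (hasDerivAt_id s).smul_const d
    have h2 := (h1.const_add a).add_const (t • e)
    simpa [hγ] using h2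
  have hlineT : ∀ s t : ℝ, HasDerivAt (fun t => γ s t) e t := by
    intro s t
    have h1 : HasDerivAt (fun t : ℝ => t • e) ((1 : ℝ) • e) t :=
      (hasDerivAt_id t).smul_const e
    have h2 := h1.const_add (a + s • d)
    simpa [hγ] using h2
  have hφinner : ∀ s t : ℝ,
      HasDerivAt (fun t => c (γ s t)) (fderiv ℝ c (γ s t) e) t :=
    fun s t => ((hdiff (γ s t)).hasFDerivAt).comp_hasDerivAt t (hlineT s t)
  have hψ : ∀ t s : ℝ, HasDerivAt (fun s => fderiv ℝ c (γ s t) e)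
      (fderiv ℝ (fderiv ℝ c) (γ s t) d e) s := by
    intro t s
    have h1 : HasDerivAt (fun s => fderiv ℝ c (γ s t))
        (fderiv ℝ (fderiv ℝ c) (γ s t) d) s :=
      ((hdiff' (γ s t)).hasFDerivAt).comp_hasDerivAt s (hlineS t s)
    simpa using h1.clm_apply (hasDerivAt_const s e)
  have hφ'neg : ∀ t : ℝ, fderiv ℝ c (γ 1 t) e - fderiv ℝ c (γ 0 t) e < 0 := by
    intro t
    obtain ⟨σ, hσ, hval⟩ := exists_hasDerivAt_eq_slope
      (fun s => fderiv ℝ c (γ s t) e)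
      (fun s => fderiv ℝ (fderiv ℝ c) (γ s t) d e)
      one_pos (fun s _ => (hψ t s).continuousAt.continuousWithinAt)
      (fun s _ => hψ t s)
    have h2 := hHneg (γ σ t)
    rw [hval] at h2
    simpa using h2
  have hMVT : c (γ 1 1) - c (γ 0 1) - (c (γ 1 0) - c (γ 0 0)) < 0 := by
    obtain ⟨τ, hτ, hval⟩ := exists_hasDerivAt_eq_slope
      (fun t => c (γ 1 t) - c (γ 0 t))
      (fun t => fderiv ℝ c (γ 1 t) e - fderiv ℝ c (γ 0 t) e)
      one_pos
      (fun t _ => ((hφinner 1 t).sub (hφinner 0 t)).continuousAt.continuousWithinAt)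
      (fun t _ => (hφinner 1 t).sub (hφinner 0 t))
    have h2 := hφ'neg τ
    rw [hval] at h2
    simp only [sub_zero, div_one] at h2
    linarith
  -- endpoint identities
  have h11 : γ 1 1 = fun j => max (x j) (y j) := by
    funext j
    simp only [hγ, Pi.add_apply, Pi.smul_apply, smul_eq_mul, one_mul, hdd, hee, ha]
    linarith [min_add_max (x j) (y j)]
  have h10 : γ 1 0 = x := by
    funext j
    simp only [hγ, Pi.add_apply, Pi.smul_apply, smul_eq_mul, one_mul, zero_mul,
      add_zero, hdd, hee, ha]
    ring
  have h01 : γ 0 1 = y := by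
    funext j
    simp only [hγ, Pi.add_apply, Pi.smul_apply, smul_eq_mul, one_mul, zero_mul,
      add_zero, zero_add, hdd, hee, ha]
    ring
  have h00 : γ 0 0 = a := by
    funext j
    simp [hγ]
  rw [h11, h10, h01, h00] at hMVT
  linarith

lemma stmt11_aux (m : ℕ) (c : (Fin m → ℝ) → ℝ)
    (hc : ContDiff ℝ 2 c)
    (hmix : ∀ i j : Fin m, i ≠ j → ∀ x : Fin m → ℝ,
      iteratedFDeriv ℝ 2 c x ![Pi.single i 1, Pi.single j 1] < 0)
    (S : Set (Fin m → ℝ))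
    (hmono : ∀ p : Finset (Fin m), p.Nonempty → p ≠ Finset.univ →
      ∀ x ∈ S, ∀ y ∈ S,
        c x + c y ≤ c (fun i => if i ∈ p then x i else y i)
          + c (fun i => if i ∈ p then y i else x i))
    (x : Fin m → ℝ) (hx : x ∈ S) (y : Fin m → ℝ) (hy : y ∈ S)
    (i0 i : Fin m) (h0 : y i0 < x i0) (hi : x i < y i) : False := by
  classical
  set p : Finset (Fin m) := Finset.univ.filter (fun j => y j ≤ x j) with hp
  have hi0p : i0 ∈ p := by simp [hp, h0.le]
  have hip : i ∉ p := by simp [hp]; linarith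
  have hne : p ≠ Finset.univ := fun h => hip (h ▸ Finset.mem_univ i)
  have hmono' := hmono p ⟨i0, hi0p⟩ hne x hx y hy
  have hz : (fun j => if j ∈ p then x j else y j) = fun j => max (x j) (y j) := by
    funext j
    by_cases hj : y j ≤ x j
    · simp [hp, hj, max_eq_left hj]
    · simp [hp, hj, max_eq_right (not_le.1 hj).le]
  have hz' : (fun j => if j ∈ p then y j else x j) = fun j => min (x j) (y j) := by
    funext j
    by_cases hj : y j ≤ x j
    · simp [hp, hj, min_eq_right hj]
    · simp [hp, hj, min_eq_left (not_le.1 hj).le]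
  rw [hz, hz'] at hmono'
  have hkey := stmt11_key m c hc hmix x y i0 i h0 hi
  linarith

/-- if `c : ℝ^m → ℝ` is `C²` with all mixed partials
`∂²c/∂x_i∂x_j < 0` (`i ≠ j`) and `S` is `c`-monotone with respect to every
partition of `{1,…,m}` into two nonempty parts, then for all `x, y ∈ S` and all
`i`, `(x₁ - y₁)(x_i - y_i) ≥ 0`. -/
theorem stmt11 (m : ℕ) (hm : 2 ≤ m) (c : (Fin m → ℝ) → ℝ)
    (hc : ContDiff ℝ 2 c)
    (hmix : ∀ i j : Fin m, i ≠ j → ∀ x : Fin m → ℝ,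
      iteratedFDeriv ℝ 2 c x ![Pi.single i 1, Pi.single j 1] < 0)
    (S : Set (Fin m → ℝ))
    (hmono : ∀ p : Finset (Fin m), p.Nonempty → p ≠ Finset.univ →
      ∀ x ∈ S, ∀ y ∈ S,
        c x + c y ≤ c (fun i => if i ∈ p then x i else y i)
          + c (fun i => if i ∈ p then y i else x i)) :
    ∀ x ∈ S, ∀ y ∈ S, ∀ i : Fin m,
      0 ≤ (x ⟨0, by omega⟩ - y ⟨0, by omega⟩) * (x i - y i) := by
  intro x hx y hy i
  by_contra hcon
  push_neg at hcon
  rcases mul_neg_iff.1 hcon with ⟨h1, h2⟩ | ⟨h1, h2⟩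
  · exact stmt11_aux m c hc hmix S hmono x hx y hy ⟨0, by omega⟩ i
      (by linarith) (by linarith)
  · exact stmt11_aux m c hc hmix S hmono y hy x hx ⟨0, by omega⟩ i
      (by linarith) (by linarith)
end

section
/- Suppose γ minimizes ∫ c dγ over probability measures on M₁ × ... × M_m with fixed marginals μ₁,...,μ_m, with c continuous and C(γ) < ∞. Then for every partition (p₊, p₋) of {1,...,m}, the support of γ is c-monotone with respect to (p₊, p₋): for all y, ỹ ∈ spt(γ), c(y) + c(ỹ) ≤ c(z) + c(z̃), where z, z̃ are the coordinate swaps of y, ỹ along the partition. -/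
open MeasureTheory

set_option maxHeartbeats 1000000 in
/-- an optimal multi-marginal coupling has `c`-monotone support
with respect to every partition of the index set into two nonempty parts.  The
support of `γ` is described as the set of points all of whose open
neighbourhoods have positive measure. -/
theorem stmt13 (m : ℕ) (hm : 2 ≤ m)
    (M : Fin m → Type*) [∀ i, TopologicalSpace (M i)] [∀ i, PolishSpace (M i)]
    [∀ i, MeasurableSpace (M i)] [∀ i, BorelSpace (M i)]
    (μ : ∀ i, Measure (M i)) [∀ i, IsProbabilityMeasure (μ i)]
    (c : (∀ i, M i) → ℝ) (hc : Continuous c)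
    (γ : Measure (∀ i, M i)) [IsProbabilityMeasure γ]
    (hmarg : ∀ i, γ.map (fun x => x i) = μ i)
    (hint : Integrable c γ)
    (hopt : ∀ γ' : Measure (∀ i, M i), IsProbabilityMeasure γ' →
      (∀ i, γ'.map (fun x => x i) = μ i) → ∫ x, c x ∂γ ≤ ∫ x, c x ∂γ') :
    ∀ p : Finset (Fin m), p.Nonempty → p ≠ Finset.univ →
      ∀ y ∈ {x : ∀ i, M i | ∀ U : Set (∀ i, M i), IsOpen U → x ∈ U → 0 < γ U},
      ∀ yt ∈ {x : ∀ i, M i | ∀ U : Set (∀ i, M i), IsOpen U → x ∈ U → 0 < γ U},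
        c y + c yt ≤ c (fun i => if i ∈ p then y i else yt i)
          + c (fun i => if i ∈ p then yt i else y i) := by
  intro p hp hpu y hy yt hyt
  set z : ∀ i, M i := fun i => if i ∈ p then y i else yt i with hz
  set zt : ∀ i, M i := fun i => if i ∈ p then yt i else y i with hzt
  by_contra hcon
  push_neg at hcon
  -- trivial case y = yt
  rcases eq_or_ne y yt with rfl | hyy
  · have h1 : z = y := by rw [hz]; funext i; split <;> rfl
    have h2 : zt = y := by rw [hzt]; funext i; split <;> rfl
    rw [h1, h2] at hcon
    exact lt_irrefl _ hcon
  -- main case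
  obtain ⟨U₀, V₀, hU₀, hV₀, hyU₀, hytV₀, hdis₀⟩ := t2_separation hyy
  set E := c y + c yt - (c z + c zt) with hE
  have hEpos : 0 < E := by rw [hE]; linarith
  set δ := E / 5 with hδ
  have hδpos : 0 < δ := by rw [hδ]; linarith
  set S : ((∀ i, M i) × (∀ i, M i)) → (∀ i, M i) :=
    fun uv i => if i ∈ p then uv.1 i else uv.2 i with hS
  set St : ((∀ i, M i) × (∀ i, M i)) → (∀ i, M i) :=
    fun uv i => if i ∈ p then uv.2 i else uv.1 i with hSt
  have hScont : Continuous S := by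
    rw [hS]; apply continuous_pi; intro i
    by_cases hi : i ∈ p
    · simpa [hi, Function.comp_def] using (continuous_apply i).comp continuous_fst
    · simpa [hi, Function.comp_def] using (continuous_apply i).comp continuous_snd
  have hStcont : Continuous St := by
    rw [hSt]; apply continuous_pi; intro i
    by_cases hi : i ∈ p
    · simpa [hi, Function.comp_def] using (continuous_apply i).comp continuous_snd
    · simpa [hi, Function.comp_def] using (continuous_apply i).comp continuous_fst
  have hSz : S (y, yt) = z := by rw [hS, hz]
  have hStz : St (y, yt) = zt := by rw [hSt, hzt]
  set O : Set (((∀ i, M i) × (∀ i, M i))) :=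
    {uv | |c uv.1 - c y| < δ ∧ |c uv.2 - c yt| < δ ∧ |c (S uv) - c z| < δ ∧
      |c (St uv) - c zt| < δ} with hO
  have habs : ∀ (f : ((∀ i, M i) × (∀ i, M i)) → (∀ i, M i)), Continuous f → ∀ r : ℝ,
      IsOpen {uv : ((∀ i, M i) × (∀ i, M i)) | |c (f uv) - r| < δ} := by
    intro f hf r
    exact isOpen_lt (((hc.comp hf).sub continuous_const).abs) continuous_const
  have hOopen : IsOpen O := by
    rw [hO]
    simp only [Set.setOf_and]
    exact ((habs _ continuous_fst _).inter ((habs _ continuous_snd _).inter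
      ((habs _ hScont _).inter (habs _ hStcont _))))
  have hyO : (y, yt) ∈ O := by
    rw [hO]
    refine ⟨?_, ?_, ?_, ?_⟩ <;> simp [hSz, hStz, hδpos]
  obtain ⟨U₁, V₁, hU₁, hV₁, hyU₁, hytV₁, hUV₁⟩ := isOpen_prod_iff.mp hOopen y yt hyO
  set U := U₁ ∩ U₀ with hUdef
  set V := V₁ ∩ V₀ with hVdef
  have hUopen : IsOpen U := hU₁.inter hU₀
  have hVopen : IsOpen V := hV₁.inter hV₀
  have hyU : y ∈ U := ⟨hyU₁, hyU₀⟩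
  have hytV : yt ∈ V := ⟨hytV₁, hytV₀⟩
  have hdis : Disjoint U V := hdis₀.mono Set.inter_subset_right Set.inter_subset_right
  have hUVO : U ×ˢ V ⊆ O :=
    (Set.prod_mono Set.inter_subset_left Set.inter_subset_left).trans hUV₁
  have hUm : MeasurableSet U := hUopen.measurableSet
  have hVm : MeasurableSet V := hVopen.measurableSet
  set a := γ U with ha
  set b := γ V with hb
  have ha0 : a ≠ 0 := (hy U hUopen hyU).ne'
  have hb0 : b ≠ 0 := (hyt V hVopen hytV).ne'
  have haT : a ≠ ⊤ := measure_ne_top γ U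
  have hbT : b ≠ ⊤ := measure_ne_top γ V
  set α := a⁻¹ • γ.restrict U with hα
  set β := b⁻¹ • γ.restrict V with hβ
  haveI hαP : IsProbabilityMeasure α := by
    constructor
    rw [hα, Measure.smul_apply, Measure.restrict_apply_univ, smul_eq_mul]
    exact ENNReal.inv_mul_cancel ha0 haT
  haveI hβP : IsProbabilityMeasure β := by
    constructor
    rw [hβ, Measure.smul_apply, Measure.restrict_apply_univ, smul_eq_mul]
    exact ENNReal.inv_mul_cancel hb0 hbT
  set t := min a b with ht
  have hta : t ≤ a := min_le_left _ _
  have htb : t ≤ b := min_le_right _ _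
  have ht0 : t ≠ 0 :=
    (lt_min (pos_iff_ne_zero.mpr ha0) (pos_iff_ne_zero.mpr hb0)).ne'
  have htT : t ≠ ⊤ := fun h => haT (top_le_iff.mp (h ▸ hta))
  set σ := α.prod β with hσ
  haveI hσP : IsProbabilityMeasure σ := by rw [hσ]; infer_instance
  set γ' := γ.restrict (U ∪ V)ᶜ +
      ((a - t) • α + ((b - t) • β + t • ((σ.map S) + (σ.map St)))) with hγ'
  have haα : a • α = γ.restrict U := by
    rw [hα, smul_smul, ENNReal.mul_inv_cancel ha0 haT, one_smul]
  have hbβ : b • β = γ.restrict V := by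
    rw [hβ, smul_smul, ENNReal.mul_inv_cancel hb0 hbT, one_smul]
  have hUVm : MeasurableSet (U ∪ V) := hUm.union hVm
  have hγdec : γ = γ.restrict (U ∪ V)ᶜ + (γ.restrict U + γ.restrict V) := by
    rw [← Measure.restrict_union hdis hVm, add_comm, Measure.restrict_add_restrict_compl hUVm]
  -- γ' is a probability measure
  have hab : a + b ≤ 1 := by
    calc a + b = γ (U ∪ V) := (measure_union hdis hVm).symm
    _ ≤ 1 := prob_le_one
  haveI hγ'P : IsProbabilityMeasure γ' := by
    constructor
    have hmS : σ.map S Set.univ = 1 := by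
      rw [Measure.map_apply hScont.measurable MeasurableSet.univ, Set.preimage_univ,
        measure_univ]
    have hmSt : σ.map St Set.univ = 1 := by
      rw [Measure.map_apply hStcont.measurable MeasurableSet.univ, Set.preimage_univ,
        measure_univ]
    rw [hγ']
    simp only [Measure.add_apply, Measure.smul_apply, smul_eq_mul, hmS, hmSt,
      measure_univ, mul_one, Measure.restrict_apply_univ]
    rw [measure_compl hUVm (measure_ne_top _ _), measure_union hdis hVm, measure_univ]
    have h1 : (a - t) + ((b - t) + t * (1 + 1)) = a + b := by
      have e1 : t * (1 + 1) = t + t := by ring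
      calc (a - t) + ((b - t) + t * (1 + 1)) = ((a - t) + t) + ((b - t) + t) := by
            rw [e1]; ring
      _ = a + b := by rw [tsub_add_cancel_of_le hta, tsub_add_cancel_of_le htb]
    rw [h1, tsub_add_cancel_of_le hab]
  -- marginals of γ'
  have hfst : Measure.map Prod.fst σ = α := by
    rw [hσ, Measure.map_fst_prod, measure_univ, one_smul]
  have hsnd : Measure.map Prod.snd σ = β := by
    rw [hσ, Measure.map_snd_prod, measure_univ, one_smul]
  have hmargγ' : ∀ i, γ'.map (fun x => x i) = μ i := by
    intro i
    have hpi : Measurable fun x : ∀ i, M i => x i := measurable_pi_apply i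
    have hsum : (σ.map S).map (fun x => x i) + (σ.map St).map (fun x => x i)
        = α.map (fun x => x i) + β.map (fun x => x i) := by
      rw [Measure.map_map hpi hScont.measurable, Measure.map_map hpi hStcont.measurable]
      by_cases hi : i ∈ p
      · have e1 : ((fun x : ∀ i, M i => x i) ∘ S) = (fun x : ∀ i, M i => x i) ∘ Prod.fst := by
          funext uv; simp [hS, hi]
        have e2 : ((fun x : ∀ i, M i => x i) ∘ St) = (fun x : ∀ i, M i => x i) ∘ Prod.snd := by
          funext uv; simp [hSt, hi]
        rw [e1, e2, ← Measure.map_map hpi measurable_fst, ← Measure.map_map hpi measurable_snd,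
          hfst, hsnd]
      · have e1 : ((fun x : ∀ i, M i => x i) ∘ S) = (fun x : ∀ i, M i => x i) ∘ Prod.snd := by
          funext uv; simp [hS, hi]
        have e2 : ((fun x : ∀ i, M i => x i) ∘ St) = (fun x : ∀ i, M i => x i) ∘ Prod.fst := by
          funext uv; simp [hSt, hi]
        rw [e1, e2, ← Measure.map_map hpi measurable_fst, ← Measure.map_map hpi measurable_snd,
          hfst, hsnd, add_comm]
    rw [hγ', Measure.map_add _ _ hpi, Measure.map_add _ _ hpi, Measure.map_add _ _ hpi,
      Measure.map_smul (a - t) α (fun x : ∀ i, M i => x i),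
      Measure.map_smul (b - t) β (fun x : ∀ i, M i => x i),
      Measure.map_smul t (Measure.map S σ + Measure.map St σ) (fun x : ∀ i, M i => x i),
      Measure.map_add _ _ hpi, hsum]
    have key : (a - t) • α.map (fun x => x i) + ((b - t) • β.map (fun x => x i) +
        t • (α.map (fun x => x i) + β.map (fun x => x i)))
        = a • α.map (fun x => x i) + b • β.map (fun x => x i) := by
      rw [smul_add]
      calc (a - t) • α.map (fun x => x i) + ((b - t) • β.map (fun x => x i) +
            (t • α.map (fun x => x i) + t • β.map (fun x => x i)))
          = ((a - t) • α.map (fun x => x i) + t • α.map (fun x => x i)) +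
            ((b - t) • β.map (fun x => x i) + t • β.map (fun x => x i)) := by abel
      _ = a • α.map (fun x => x i) + b • β.map (fun x => x i) := by
            rw [← add_smul, ← add_smul, tsub_add_cancel_of_le hta, tsub_add_cancel_of_le htb]
    rw [key, ← Measure.map_smul a α (fun x : ∀ i, M i => x i),
      ← Measure.map_smul b β (fun x : ∀ i, M i => x i),
      haα, hbβ, ← Measure.map_add _ _ hpi, ← Measure.map_add _ _ hpi, ← hγdec, hmarg i]
  -- integrability facts
  have hintR : Integrable c (γ.restrict (U ∪ V)ᶜ) := hint.restrict
  have hintU : Integrable c (γ.restrict U) := hint.restrict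
  have hintV : Integrable c (γ.restrict V) := hint.restrict
  have hintα : Integrable c α := by
    rw [hα]; exact hintU.smul_measure (by simp [ha0])
  have hintβ : Integrable c β := by
    rw [hβ]; exact hintV.smul_measure (by simp [hb0])
  -- a.e. facts on σ
  have hαU : α U = 1 := by
    rw [hα, Measure.smul_apply, Measure.restrict_apply hUm, Set.inter_self, smul_eq_mul]
    exact ENNReal.inv_mul_cancel ha0 haT
  have hβV : β V = 1 := by
    rw [hβ, Measure.smul_apply, Measure.restrict_apply hVm, Set.inter_self, smul_eq_mul]
    exact ENNReal.inv_mul_cancel hb0 hbT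
  have hσUV : σ ((U ×ˢ V)ᶜ) = 0 := by
    have h1 : σ (U ×ˢ V) = 1 := by rw [hσ, Measure.prod_prod, hαU, hβV, one_mul]
    rw [measure_compl (hUm.prod hVm) (measure_ne_top _ _), h1, measure_univ, tsub_self]
  have hae : ∀ᵐ uv ∂σ, uv ∈ U ×ˢ V := by
    rw [ae_iff]
    simpa [Set.compl_def] using hσUV
  have haeO : ∀ᵐ uv ∂σ, uv ∈ O := hae.mono fun uv h => hUVO h
  have hbound : ∀ (f : ((∀ i, M i) × (∀ i, M i)) → (∀ i, M i)), Continuous f → ∀ r : ℝ,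
      (∀ᵐ uv ∂σ, |c (f uv) - r| < δ) → Integrable (fun uv => c (f uv)) σ := by
    intro f hf r hr
    apply Integrable.mono' (integrable_const (|r| + δ)) ((hc.comp hf).aestronglyMeasurable)
    filter_upwards [hr] with uv huv
    have h1 : |c (f uv)| - |r| ≤ |c (f uv) - r| := abs_sub_abs_le_abs_sub _ _
    simp only [Real.norm_eq_abs, Function.comp_apply] at *
    linarith
  have hO1 : ∀ᵐ uv ∂σ, |c uv.1 - c y| < δ := haeO.mono fun uv h => h.1
  have hO2 : ∀ᵐ uv ∂σ, |c uv.2 - c yt| < δ := haeO.mono fun uv h => h.2.1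
  have hO3 : ∀ᵐ uv ∂σ, |c (S uv) - c z| < δ := haeO.mono fun uv h => h.2.2.1
  have hO4 : ∀ᵐ uv ∂σ, |c (St uv) - c zt| < δ := haeO.mono fun uv h => h.2.2.2
  have hintfst : Integrable (fun uv => c uv.1) σ := hbound Prod.fst continuous_fst _ hO1
  have hintsnd : Integrable (fun uv => c uv.2) σ := hbound Prod.snd continuous_snd _ hO2
  have hintS : Integrable (fun uv => c (S uv)) σ := hbound S hScont _ hO3
  have hintSt : Integrable (fun uv => c (St uv)) σ := hbound St hStcont _ hO4
  have hintSm : Integrable c (σ.map S) :=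
    (integrable_map_measure hc.aestronglyMeasurable hScont.measurable.aemeasurable).mpr hintS
  have hintStm : Integrable c (σ.map St) :=
    (integrable_map_measure hc.aestronglyMeasurable hStcont.measurable.aemeasurable).mpr hintSt
  -- integral identities
  have hIA : ∫ x, c x ∂α = ∫ uv, c uv.1 ∂σ := by
    rw [← hfst, integral_map measurable_fst.aemeasurable hc.aestronglyMeasurable]
  have hIB : ∫ x, c x ∂β = ∫ uv, c uv.2 ∂σ := by
    rw [← hsnd, integral_map measurable_snd.aemeasurable hc.aestronglyMeasurable]
  have hIS : ∫ x, c x ∂(σ.map S) = ∫ uv, c (S uv) ∂σ :=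
    integral_map hScont.measurable.aemeasurable hc.aestronglyMeasurable
  have hISt : ∫ x, c x ∂(σ.map St) = ∫ uv, c (St uv) ∂σ :=
    integral_map hStcont.measurable.aemeasurable hc.aestronglyMeasurable
  -- the key gain
  have hg : δ ≤ ∫ uv, (c uv.1 + c uv.2 - c (S uv) - c (St uv)) ∂σ := by
    have hint_g : Integrable (fun uv => c uv.1 + c uv.2 - c (S uv) - c (St uv)) σ :=
      ((hintfst.add hintsnd).sub hintS).sub hintSt
    have hlow : ∀ᵐ uv ∂σ, δ ≤ c uv.1 + c uv.2 - c (S uv) - c (St uv) := by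
      filter_upwards [hO1, hO2, hO3, hO4] with uv h1 h2 h3 h4
      have a1 := abs_lt.mp h1
      have a2 := abs_lt.mp h2
      have a3 := abs_lt.mp h3
      have a4 := abs_lt.mp h4
      have hδE : δ = E / 5 := hδ
      have hEd : E = c y + c yt - (c z + c zt) := hE
      linarith
    have hconst : ∫ _, δ ∂σ = δ := by simp
    calc δ = ∫ _, δ ∂σ := hconst.symm
    _ ≤ _ := integral_mono_ae (integrable_const δ) hint_g hlow
  -- splitting integrals
  have hsplit : ∫ x, c x ∂γ' = ∫ x, c x ∂(γ.restrict (U ∪ V)ᶜ) +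
      ((a - t).toReal * ∫ x, c x ∂α + ((b - t).toReal * ∫ x, c x ∂β +
        t.toReal * (∫ uv, c (S uv) ∂σ + ∫ uv, c (St uv) ∂σ))) := by
    have i1 : Integrable c ((a - t) • α) :=
      hintα.smul_measure (fun h => haT (top_le_iff.mp (h ▸ tsub_le_self (a := a) (b := t))))
    have i2 : Integrable c ((b - t) • β) :=
      hintβ.smul_measure (fun h => hbT (top_le_iff.mp (h ▸ tsub_le_self (a := b) (b := t))))
    have i3 : Integrable c (σ.map S + σ.map St) := hintSm.add_measure hintStm
    have i4 : Integrable c (t • (σ.map S + σ.map St)) := i3.smul_measure htT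
    rw [hγ', integral_add_measure hintR (i1.add_measure (i2.add_measure i4)),
      integral_add_measure i1 (i2.add_measure i4), integral_add_measure i2 i4,
      integral_smul_measure _ (a - t), integral_smul_measure _ (b - t),
      integral_smul_measure _ t, integral_add_measure hintSm hintStm, hIS, hISt]
    simp only [smul_eq_mul]
  have hsplitγ : ∫ x, c x ∂γ = ∫ x, c x ∂(γ.restrict (U ∪ V)ᶜ) +
      (a.toReal * ∫ x, c x ∂α + b.toReal * ∫ x, c x ∂β) := by
    conv_lhs => rw [hγdec]
    rw [integral_add_measure hintR (hintU.add_measure hintV),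
      integral_add_measure hintU hintV, ← haα, ← hbβ,
      integral_smul_measure _ a, integral_smul_measure _ b]
    simp only [smul_eq_mul]
  -- conclude
  have hgs : δ ≤ ∫ x, c x ∂α + ∫ x, c x ∂β - ∫ uv, c (S uv) ∂σ - ∫ uv, c (St uv) ∂σ := by
    rw [hIA, hIB]
    have e : ∫ uv, (c uv.1 + c uv.2 - c (S uv) - c (St uv)) ∂σ
        = ∫ uv, c uv.1 ∂σ + ∫ uv, c uv.2 ∂σ - ∫ uv, c (S uv) ∂σ - ∫ uv, c (St uv) ∂σ := by
      have h1 := integral_sub ((hintfst.add hintsnd).sub hintS) hintSt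
      have h2 := integral_sub (hintfst.add hintsnd) hintS
      have h3 := integral_add hintfst hintsnd
      simp only [Pi.add_apply, Pi.sub_apply] at h1 h2 h3
      rw [h1, h2, h3]
    calc δ ≤ ∫ uv, (c uv.1 + c uv.2 - c (S uv) - c (St uv)) ∂σ := hg
    _ = _ := e
  have htpos : 0 < t.toReal := ENNReal.toReal_pos ht0 htT
  have hlt : ∫ x, c x ∂γ' < ∫ x, c x ∂γ := by
    rw [hsplit, hsplitγ, ENNReal.toReal_sub_of_le hta haT, ENNReal.toReal_sub_of_le htb hbT]
    nlinarith [mul_pos htpos (hδpos.trans_le hgs), htpos, hδpos]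
  exact absurd (hopt γ' hγ'P hmargγ') (not_le.mpr hlt)
end

section
/- Let m = 4, h : ℝ^n → ℝ strictly convex, c(x,y,z,w) = h(x+y+z+w), and let all four marginals be Lebesgue measure on the unit cube Iⁿ. Then the uniform measures γ₁ on S₁ ∩ (Iⁿ)⁴ (where S₁: y = (1,...,1) - w, z = (1,...,1) - x) and γ₂ on S₂ ∩ (Iⁿ)⁴ (where S₂: y = (1,...,1) - x, z = (1,...,1) - w) are two distinct optimal couplings for this multi-marginal problem; in particular the minimizer is not unique. -/
open MeasureTheory

/-- Lebesgue measure on the unit cube `Iⁿ`. -/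
noncomputable def cubeMeasure (n : ℕ) : Measure (Fin n → ℝ) :=
  (volume : Measure (Fin n → ℝ)).restrict (Set.Icc 0 1)

/-- Uniform measure on `S₁ ∩ (Iⁿ)⁴`, where `S₁ : y = 1 - w, z = 1 - x`,
parametrized by `(x, w)`. -/
noncomputable def gammaOne (n : ℕ) : Measure (Fin 4 → Fin n → ℝ) :=
  Measure.map (fun p : (Fin n → ℝ) × (Fin n → ℝ) => ![p.1, 1 - p.2, 1 - p.1, p.2])
    ((cubeMeasure n).prod (cubeMeasure n))

/-- Uniform measure on `S₂ ∩ (Iⁿ)⁴`, where `S₂ : y = 1 - x, z = 1 - w`. -/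
noncomputable def gammaTwo (n : ℕ) : Measure (Fin 4 → Fin n → ℝ) :=
  Measure.map (fun p : (Fin n → ℝ) × (Fin n → ℝ) => ![p.1, 1 - p.1, 1 - p.2, p.2])
    ((cubeMeasure n).prod (cubeMeasure n))

instance cubeMeasure_prob (n : ℕ) : IsProbabilityMeasure (cubeMeasure n) := by
  constructor
  rw [cubeMeasure, Measure.restrict_apply_univ, Real.volume_Icc_pi]
  simp

lemma reflect_mp (n : ℕ) :
    MeasurePreserving (fun y : Fin n → ℝ => 1 - y) (cubeMeasure n) (cubeMeasure n) := by
  have h1 : MeasurePreserving (fun y : Fin n → ℝ => 1 - y)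
      (volume : Measure (Fin n → ℝ)) volume := Measure.measurePreserving_sub_left volume 1
  have h2 : (fun y : Fin n → ℝ => 1 - y) ⁻¹' (Set.Icc 0 1) = Set.Icc 0 1 := by
    ext y
    simp only [Set.mem_preimage, Set.mem_Icc, sub_nonneg, sub_le_self_iff]
    tauto
  have := h1.restrict_preimage (s := Set.Icc (0 : Fin n → ℝ) 1) measurableSet_Icc
  rwa [h2] at this

lemma reflect_map (n : ℕ) :
    (cubeMeasure n).map (fun y : Fin n → ℝ => 1 - y) = cubeMeasure n :=
  (reflect_mp n).map_eq

lemma meas_reflect (n : ℕ) : Measurable (fun y : Fin n → ℝ => 1 - y) :=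
  measurable_const.sub measurable_id

lemma meas_e1 (n : ℕ) :
    Measurable (fun p : (Fin n → ℝ) × (Fin n → ℝ) => ![p.1, 1 - p.2, 1 - p.1, p.2]) := by
  rw [measurable_pi_iff]
  intro i
  fin_cases i <;> simp <;>
    first
      | exact measurable_fst
      | exact measurable_snd
      | exact measurable_const.sub measurable_fst
      | exact measurable_const.sub measurable_snd

lemma meas_e2 (n : ℕ) :
    Measurable (fun p : (Fin n → ℝ) × (Fin n → ℝ) => ![p.1, 1 - p.1, 1 - p.2, p.2]) := by
  rw [measurable_pi_iff]
  intro i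
  fin_cases i <;> simp <;>
    first
      | exact measurable_fst
      | exact measurable_snd
      | exact measurable_const.sub measurable_fst
      | exact measurable_const.sub measurable_snd

lemma cube_map_fst (n : ℕ) :
    ((cubeMeasure n).prod (cubeMeasure n)).map Prod.fst = cubeMeasure n := by
  simp [Measure.map_fst_prod]

lemma cube_map_snd (n : ℕ) :
    ((cubeMeasure n).prod (cubeMeasure n)).map Prod.snd = cubeMeasure n := by
  simp [Measure.map_snd_prod]

lemma cube_map_reflect_fst (n : ℕ) :
    ((cubeMeasure n).prod (cubeMeasure n)).map (fun p : (Fin n → ℝ) × (Fin n → ℝ) => 1 - p.1)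
      = cubeMeasure n := by
  have : (fun p : (Fin n → ℝ) × (Fin n → ℝ) => 1 - p.1)
      = (fun y : Fin n → ℝ => 1 - y) ∘ Prod.fst := rfl
  rw [this, ← Measure.map_map (meas_reflect n) measurable_fst, cube_map_fst, reflect_map]

lemma cube_map_reflect_snd (n : ℕ) :
    ((cubeMeasure n).prod (cubeMeasure n)).map (fun p : (Fin n → ℝ) × (Fin n → ℝ) => 1 - p.2)
      = cubeMeasure n := by
  have : (fun p : (Fin n → ℝ) × (Fin n → ℝ) => 1 - p.2)
      = (fun y : Fin n → ℝ => 1 - y) ∘ Prod.snd := rfl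
  rw [this, ← Measure.map_map (meas_reflect n) measurable_snd, cube_map_snd, reflect_map]

lemma gammaOne_marginal (n : ℕ) (i : Fin 4) :
    (gammaOne n).map (fun x => x i) = cubeMeasure n := by
  rw [gammaOne, Measure.map_map (measurable_pi_apply i) (meas_e1 n)]
  fin_cases i
  · exact cube_map_fst n
  · exact cube_map_reflect_snd n
  · exact cube_map_reflect_fst n
  · exact cube_map_snd n

lemma gammaTwo_marginal (n : ℕ) (i : Fin 4) :
    (gammaTwo n).map (fun x => x i) = cubeMeasure n := by
  rw [gammaTwo, Measure.map_map (measurable_pi_apply i) (meas_e2 n)]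
  fin_cases i
  · exact cube_map_fst n
  · exact cube_map_reflect_fst n
  · exact cube_map_reflect_snd n
  · exact cube_map_snd n

/-- for `c(x,y,z,w) = h(x+y+z+w)` with `h` strictly convex and
all four marginals Lebesgue measure on the unit cube, `γ₁` and `γ₂` are two
distinct optimal couplings; in particular the minimizer is not unique. -/
theorem stmt15 (n : ℕ) (hn : 1 ≤ n)
    (h : (Fin n → ℝ) → ℝ) (hconv : StrictConvexOn ℝ Set.univ h) :
    (∀ i : Fin 4, (gammaOne n).map (fun x => x i) = cubeMeasure n) ∧
    (∀ i : Fin 4, (gammaTwo n).map (fun x => x i) = cubeMeasure n) ∧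
    (∀ γ' : Measure (Fin 4 → Fin n → ℝ), IsProbabilityMeasure γ' →
      (∀ i, γ'.map (fun x => x i) = cubeMeasure n) →
      Integrable (fun x => h (x 0 + x 1 + x 2 + x 3)) γ' →
      (∫ x, h (x 0 + x 1 + x 2 + x 3) ∂(gammaOne n)
          ≤ ∫ x, h (x 0 + x 1 + x 2 + x 3) ∂γ') ∧
      (∫ x, h (x 0 + x 1 + x 2 + x 3) ∂(gammaTwo n)
          ≤ ∫ x, h (x 0 + x 1 + x 2 + x 3) ∂γ')) ∧
    gammaOne n ≠ gammaTwo n := by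
  have hnE : Nonempty (Fin n) := Fin.pos_iff_nonempty.mp hn
  -- continuity of h
  have hcont : Continuous h := by
    exact continuousOn_univ.mp (hconv.convexOn.continuousOn isOpen_univ)
  -- sum function is continuous / measurable
  have hsum_cont : Continuous (fun x : Fin 4 → (Fin n → ℝ) => x 0 + x 1 + x 2 + x 3) := by
    fun_prop
  -- integrals over gammaOne and gammaTwo are h 2
  have hint1 : ∫ x, h (x 0 + x 1 + x 2 + x 3) ∂(gammaOne n) = h 2 := by
    rw [gammaOne, integral_map (meas_e1 n).aemeasurable
      (show Continuous (fun x : Fin 4 → Fin n → ℝ => h (x 0 + x 1 + x 2 + x 3)) from hcont.comp hsum_cont).aestronglyMeasurable]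
    have : ∀ p : (Fin n → ℝ) × (Fin n → ℝ),
        (![p.1, 1 - p.2, 1 - p.1, p.2] 0 + ![p.1, 1 - p.2, 1 - p.1, p.2] 1 +
          ![p.1, 1 - p.2, 1 - p.1, p.2] 2 + ![p.1, 1 - p.2, 1 - p.1, p.2] 3) = 2 := by
      intro p
      simp only [Matrix.cons_val_zero, Matrix.cons_val_one, Matrix.head_cons,
        Matrix.cons_val_two, Matrix.cons_val_three, Matrix.tail_cons]
      ring
    simp only [this, integral_const, measure_univ, ENNReal.toReal_one, probReal_univ, one_smul]
  have hint2 : ∫ x, h (x 0 + x 1 + x 2 + x 3) ∂(gammaTwo n) = h 2 := by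
    rw [gammaTwo, integral_map (meas_e2 n).aemeasurable
      (show Continuous (fun x : Fin 4 → Fin n → ℝ => h (x 0 + x 1 + x 2 + x 3)) from hcont.comp hsum_cont).aestronglyMeasurable]
    have : ∀ p : (Fin n → ℝ) × (Fin n → ℝ),
        (![p.1, 1 - p.1, 1 - p.2, p.2] 0 + ![p.1, 1 - p.1, 1 - p.2, p.2] 1 +
          ![p.1, 1 - p.1, 1 - p.2, p.2] 2 + ![p.1, 1 - p.1, 1 - p.2, p.2] 3) = 2 := by
      intro p
      simp only [Matrix.cons_val_zero, Matrix.cons_val_one, Matrix.head_cons,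
        Matrix.cons_val_two, Matrix.cons_val_three, Matrix.tail_cons]
      ring
    simp only [this, integral_const, measure_univ, ENNReal.toReal_one, probReal_univ, one_smul]
  refine ⟨gammaOne_marginal n, gammaTwo_marginal n, ?_, ?_⟩
  · -- optimality via Jensen
    intro γ' hγp hγm hγint
    -- id is integrable on the cube
    have hcubeInt : Integrable (fun y : Fin n → ℝ => y) (cubeMeasure n) :=
      continuous_id.continuousOn.integrableOn_compact isCompact_Icc
    have hcoordInt : ∀ i : Fin 4,
        Integrable (fun x : Fin 4 → (Fin n → ℝ) => x i) γ' := by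
      intro i
      have h0 : Integrable (id : (Fin n → ℝ) → (Fin n → ℝ)) (γ'.map (fun x => x i)) := by
        rw [hγm i]; exact hcubeInt
      exact (integrable_map_measure aestronglyMeasurable_id
        (measurable_pi_apply i).aemeasurable).mp h0
    have i01 : Integrable (fun x : Fin 4 → (Fin n → ℝ) => x 0 + x 1) γ' :=
      (hcoordInt 0).add (hcoordInt 1)
    have i012 : Integrable (fun x : Fin 4 → (Fin n → ℝ) => x 0 + x 1 + x 2) γ' :=
      i01.add (hcoordInt 2)
    have hfint : Integrable (fun x : Fin 4 → (Fin n → ℝ) => x 0 + x 1 + x 2 + x 3) γ' :=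
      i012.add (hcoordInt 3)
    -- mean of each coordinate
    set m : Fin n → ℝ := ∫ y, y ∂(cubeMeasure n) with hm
    have hcoordMean : ∀ i : Fin 4,
        ∫ x, x i ∂γ' = m := by
      intro i
      have := integral_map (μ := γ') (φ := fun x : Fin 4 → (Fin n → ℝ) => x i)
        (f := fun y : Fin n → ℝ => y) (measurable_pi_apply i).aemeasurable
        aestronglyMeasurable_id
      rw [hγm i] at this
      exact this.symm
    have hmm : m + m = 1 := by
      have hrefl : ∫ y, (1 - y) ∂(cubeMeasure n) = m := by
        have := integral_map (μ := cubeMeasure n) (φ := fun y : Fin n → ℝ => 1 - y)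
          (f := fun y : Fin n → ℝ => y) (meas_reflect n).aemeasurable
          aestronglyMeasurable_id
        rw [reflect_map n] at this
        exact this.symm
      have hint1y : Integrable (fun y : Fin n → ℝ => 1 - y) (cubeMeasure n) :=
        (integrable_const 1).sub hcubeInt
      calc m + m = (∫ y, y ∂(cubeMeasure n)) + ∫ y, (1 - y) ∂(cubeMeasure n) := by
            rw [hrefl]
        _ = ∫ y, (y + (1 - y)) ∂(cubeMeasure n) := (integral_add hcubeInt hint1y).symm
        _ = ∫ _, (1 : Fin n → ℝ) ∂(cubeMeasure n) := by
            congr 1; funext y; ring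
        _ = 1 := by simp
    have hmean : ∫ x, (x 0 + x 1 + x 2 + x 3) ∂γ' = 2 := by
      rw [integral_add i012 (hcoordInt 3), integral_add i01 (hcoordInt 2),
        integral_add (hcoordInt 0) (hcoordInt 1),
        hcoordMean 0, hcoordMean 1, hcoordMean 2, hcoordMean 3]
      calc m + m + m + m = (m + m) + (m + m) := by ring
        _ = (1 : Fin n → ℝ) + 1 := by rw [hmm]
        _ = 2 := by ring
    have hJ : h (∫ x, (x 0 + x 1 + x 2 + x 3) ∂γ')
        ≤ ∫ x, h (x 0 + x 1 + x 2 + x 3) ∂γ' :=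
      hconv.convexOn.map_integral_le hcont.continuousOn isClosed_univ
        (Filter.Eventually.of_forall fun _ => Set.mem_univ _) hfint hγint
    rw [hmean] at hJ
    exact ⟨hint1.le.trans hJ, hint2.le.trans hJ⟩
  · -- distinctness
    intro he
    set A : Set (Fin 4 → Fin n → ℝ) := {x | x 1 = 1 - x 3} with hA
    have hAmeas : MeasurableSet A := by
      apply measurableSet_eq_fun
      · exact measurable_pi_apply 1
      · exact measurable_const.sub (measurable_pi_apply 3)
    have h1 : gammaOne n A = 1 := by
      rw [gammaOne, Measure.map_apply (meas_e1 n) hAmeas]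
      have : (fun p : (Fin n → ℝ) × (Fin n → ℝ) => ![p.1, 1 - p.2, 1 - p.1, p.2]) ⁻¹' A
          = Set.univ := by
        ext p
        simp [hA, Matrix.cons_val_one, Matrix.head_cons]
      rw [this]
      exact measure_univ
    have h2 : gammaTwo n A = 0 := by
      rw [gammaTwo, Measure.map_apply (meas_e2 n) hAmeas]
      have hpre : (fun p : (Fin n → ℝ) × (Fin n → ℝ) => ![p.1, 1 - p.1, 1 - p.2, p.2]) ⁻¹' A
          = {p : (Fin n → ℝ) × (Fin n → ℝ) | p.1 = p.2} := by
        ext p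
        simp only [hA, Set.mem_preimage, Set.mem_setOf_eq, Matrix.cons_val_one,
          Matrix.head_cons, Matrix.cons_val_three, Matrix.tail_cons]
        constructor
        · intro hp; have := sub_right_injective hp; exact this
        · intro hp; rw [hp]; rfl
      rw [hpre]
      have hdiag : MeasurableSet {p : (Fin n → ℝ) × (Fin n → ℝ) | p.1 = p.2} :=
        measurableSet_eq_fun measurable_fst measurable_snd
      rw [Measure.prod_apply hdiag]
      have : ∀ x : Fin n → ℝ,
          (cubeMeasure n) (Prod.mk x ⁻¹' {p : (Fin n → ℝ) × (Fin n → ℝ) | p.1 = p.2}) = 0 := by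
        intro x
        have : Prod.mk x ⁻¹' {p : (Fin n → ℝ) × (Fin n → ℝ) | p.1 = p.2} = {x} := by
          ext y; simp [eq_comm]
        rw [this]
        haveI : NullSingletonClass (cubeMeasure n) :=
          show NullSingletonClass ((volume : Measure (Fin n → ℝ)).restrict (Set.Icc 0 1)) from
            inferInstance
        exact measure_singleton x
      simp only [this, lintegral_zero]
    rw [he, h2] at h1
    exact zero_ne_one h1
end
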